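/- arXiv:2312.14043 — 7 statements merged into one kernel-verified Lean document; each statement's English description precedes it below -/
import Mathlib

section
/- The elementary dual equivalence operator D_i on standard Young tableaux is an involution: D_i(D_i(T)) = T for every standard tableau T with n boxes and every integer 1 < i < n. -/
open scoped Classical

/-- A cell `(row, column)` of a Young diagram. -/
abbrev Cell := ℕ × ℕ

/-- A standard Young tableau with `n` boxes, encoded by the position `p k` of each
entry `k ∈ [n]`: the positions are distinct, and for each `k ≤ n` the set of
positions of the entries `1, ..., k` is a Young diagram (a lower set in `ℕ × ℕ`). -/
def IsStdTab (n : ℕ) (p : ℕ → Cell) : Prop :=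
  Set.InjOn p (Set.Icc 1 n) ∧
  ∀ k, k ≤ n → ∀ j ∈ Set.Icc 1 k, ∀ c : Cell,
    c.1 ≤ (p j).1 → c.2 ≤ (p j).2 → ∃ m ∈ Set.Icc 1 k, p m = c

/-- `readLt a b` : the cell `a` comes strictly before the cell `b` in the
row reading order (rows read from bottom to top, left to right). -/
def readLt (a b : Cell) : Prop := b.1 < a.1 ∨ (a.1 = b.1 ∧ a.2 < b.2)

/-- The entry `x` lies (strictly) between the entries `y` and `z` in the row
reading word of the tableau with position function `p`. -/
def btwIn (p : ℕ → Cell) (x y z : ℕ) : Prop :=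
  (readLt (p y) (p x) ∧ readLt (p x) (p z)) ∨ (readLt (p z) (p x) ∧ readLt (p x) (p y))

/-- The elementary dual equivalence operator `D_i`: it equals `s_{i-1}(T)` if `i+1`
lies between `i` and `i-1` in the reading word, `s_i(T)` if `i-1` lies between `i`
and `i+1`, and `T` otherwise; here `s_j(T)` swaps the entries `j` and `j+1`. -/
noncomputable def Dop (i : ℕ) (p : ℕ → Cell) : ℕ → Cell :=
  if btwIn p (i + 1) i (i - 1) then p ∘ (Equiv.swap (i - 1) i)
  else if btwIn p (i - 1) i (i + 1) then p ∘ (Equiv.swap i (i + 1))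
  else p

/-- The elementary dual equivalence operator `D_i` is an involution on standard
Young tableaux with `n` boxes, for `1 < i < n`. -/
theorem Dop_involution (n i : ℕ) (hi1 : 1 < i) (hi2 : i < n)
    (p : ℕ → Cell) (hp : IsStdTab n p) : Dop i (Dop i p) = p := by
  have hne1 : (i + 1) ≠ (i - 1) := by omega
  have hne2 : (i + 1) ≠ i := by omega
  have hne3 : (i - 1) ≠ i := by omega
  have hne4 : (i - 1) ≠ (i + 1) := by omega
  by_cases h1 : btwIn p (i + 1) i (i - 1)
  · have hDq : Dop i p = p ∘ (Equiv.swap (i - 1) i) := by rw [Dop, if_pos h1]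
    have hq1 : btwIn (p ∘ (Equiv.swap (i - 1) i)) (i + 1) i (i - 1) := by
      simp only [btwIn, Function.comp_apply, Equiv.swap_apply_left, Equiv.swap_apply_right,
        Equiv.swap_apply_of_ne_of_ne hne1 hne2]
      exact h1.symm
    rw [hDq, Dop, if_pos hq1]
    funext x
    simp [Equiv.swap_apply_self]
  · by_cases h2 : btwIn p (i - 1) i (i + 1)
    · have hDq : Dop i p = p ∘ (Equiv.swap i (i + 1)) := by rw [Dop, if_neg h1, if_pos h2]
      have hswap : ∀ m, (p ∘ (Equiv.swap i (i + 1))) m = p (Equiv.swap i (i + 1) m) :=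
        fun m => rfl
      have hq1 : ¬ btwIn (p ∘ (Equiv.swap i (i + 1))) (i + 1) i (i - 1) := by
        simp only [btwIn, Function.comp_apply, Equiv.swap_apply_left, Equiv.swap_apply_right,
          Equiv.swap_apply_of_ne_of_ne hne3 hne4, readLt] at h2 ⊢
        omega
      have hq2 : btwIn (p ∘ (Equiv.swap i (i + 1))) (i - 1) i (i + 1) := by
        simp only [btwIn, Function.comp_apply, Equiv.swap_apply_left, Equiv.swap_apply_right,
          Equiv.swap_apply_of_ne_of_ne hne3 hne4] at h2 ⊢
        exact h2.symm
      rw [hDq, Dop, if_neg hq1, if_pos hq2]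
      funext x
      simp [Equiv.swap_apply_self]
    · have hDp : Dop i p = p := by rw [Dop, if_neg h1, if_neg h2]
      rw [hDp, hDp]
end

section
/- For a standard Young tableau T with n boxes and 1 < i < n, the result D_i(T) of applying the elementary dual equivalence operator to T is again a standard Young tableau. -/
open scoped Classical

lemma dominance {n : ℕ} {p : ℕ → Cell} (hp : IsStdTab n p) {l m : ℕ}
    (hl : 1 ≤ l) (hln : l ≤ n) (hm : 1 ≤ m) (hmn : m ≤ n)
    (h1 : (p l).1 ≤ (p m).1) (h2 : (p l).2 ≤ (p m).2) : l ≤ m := by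
  obtain ⟨m', hm', he⟩ := hp.2 m hmn m (Set.mem_Icc.mpr ⟨hm, le_refl m⟩) (p l) h1 h2
  simp only [Set.mem_Icc] at hm'
  have : m' = l := hp.1 (Set.mem_Icc.mpr ⟨hm'.1, hm'.2.trans hmn⟩) (Set.mem_Icc.mpr ⟨hl, hln⟩) he
  omega

lemma row_or_col {n l l' : ℕ} {p : ℕ → Cell} (hp : IsStdTab n p) (hll : l' = l + 1)
    (hl : 1 ≤ l) (hln : l' ≤ n)
    (h1 : (p l).1 ≤ (p l').1) (h2 : (p l).2 ≤ (p l').2) :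
    ((p l).1 = (p l').1 ∧ (p l).2 < (p l').2) ∨
    ((p l').1 = (p l).1 + 1 ∧ (p l).2 = (p l').2) := by
  subst hll
  have hne : p l ≠ p (l + 1) := by
    intro h
    have := hp.1 (Set.mem_Icc.mpr ⟨hl, by omega⟩) (Set.mem_Icc.mpr ⟨by omega, hln⟩) h
    omega
  rcases eq_or_lt_of_le h1 with heq | hlt
  · left
    refine ⟨heq, lt_of_le_of_ne h2 ?_⟩
    intro h; exact hne (Prod.ext heq h)
  · obtain ⟨m, hm, he⟩ := hp.2 (l+1) hln (l+1) (Set.mem_Icc.mpr ⟨by omega, le_refl _⟩)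
      ((p (l+1)).1 - 1, (p (l+1)).2) (show (p (l+1)).1 - 1 ≤ (p (l+1)).1 by omega)
      (le_refl ((p (l+1)).2))
    simp only [Set.mem_Icc] at hm
    have hm1 : (p m).1 = (p (l+1)).1 - 1 := by rw [he]
    have hm2 : (p m).2 = (p (l+1)).2 := by rw [he]
    have hml : l ≤ m := dominance hp hl (by omega) hm.1 (by omega)
      (show (p l).1 ≤ (p m).1 by omega) (show (p l).2 ≤ (p m).2 by omega)
    have hmne : m ≠ l + 1 := by intro h; subst h; omega
    have : m = l := by omega
    subst this
    right; constructor <;> omega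

lemma swap_std {n j j' : ℕ} {p : ℕ → Cell} (hp : IsStdTab n p) (hjj : j' = j + 1)
    (hj1 : 1 ≤ j) (hj2 : j' ≤ n)
    (hkey : ¬((p j).1 ≤ (p j').1 ∧ (p j).2 ≤ (p j').2)) :
    IsStdTab n (p ∘ Equiv.swap j j') := by
  subst hjj
  set σ := Equiv.swap j (j+1) with hσ
  have hσj : σ j = j + 1 := Equiv.swap_apply_left j (j+1)
  have hσj' : σ (j+1) = j := Equiv.swap_apply_right j (j+1)
  have hσo : ∀ a, a ≠ j → a ≠ j + 1 → σ a = a := fun a h1 h2 => Equiv.swap_apply_of_ne_of_ne h1 h2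
  have hval : ∀ a, (σ a = a ∧ a ≠ j ∧ a ≠ j+1) ∨ (a = j ∧ σ a = j+1) ∨ (a = j+1 ∧ σ a = j) := by
    intro a
    rcases eq_or_ne a j with rfl | h1
    · right; left; exact ⟨rfl, hσj⟩
    rcases eq_or_ne a (j+1) with rfl | h2
    · right; right; exact ⟨rfl, hσj'⟩
    · left; exact ⟨hσo a h1 h2, h1, h2⟩
  constructor
  · intro a ha b hb hab
    simp only [Set.mem_Icc] at ha hb
    have haσ : 1 ≤ σ a ∧ σ a ≤ n := by
      rcases hval a with ⟨h, _, _⟩|⟨_, h⟩|⟨_, h⟩ <;> rw [h] <;> omega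
    have hbσ : 1 ≤ σ b ∧ σ b ≤ n := by
      rcases hval b with ⟨h, _, _⟩|⟨_, h⟩|⟨_, h⟩ <;> rw [h] <;> omega
    have : σ a = σ b := hp.1 (Set.mem_Icc.mpr haσ) (Set.mem_Icc.mpr hbσ) hab
    exact σ.injective this
  · intro k hk m0 hm0 c h1 h2
    simp only [Set.mem_Icc] at hm0
    simp only [Function.comp_apply] at h1 h2
    rcases lt_trichotomy k j with hkj | rfl | hkj
    · have hfix : σ m0 = m0 := hσo m0 (by omega) (by omega)
      rw [hfix] at h1 h2
      obtain ⟨m, hm, he⟩ := hp.2 k (by omega) m0 (Set.mem_Icc.mpr ⟨hm0.1, hm0.2⟩) c h1 h2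
      simp only [Set.mem_Icc] at hm
      refine ⟨m, Set.mem_Icc.mpr ⟨hm.1, hm.2⟩, ?_⟩
      have hfm : σ m = m := hσo m (by omega) (by omega)
      simp only [Function.comp_apply, hfm]; exact he
    · have ht : 1 ≤ σ m0 ∧ σ m0 ≤ k + 1 ∧ σ m0 ≠ k := by
        rcases hval m0 with ⟨h, h', _⟩|⟨h', h⟩|⟨h', h⟩ <;> rw [h] <;> omega
      obtain ⟨m, hm, he⟩ := hp.2 (k+1) hj2 (σ m0) (Set.mem_Icc.mpr ⟨ht.1, ht.2.1⟩) c h1 h2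
      simp only [Set.mem_Icc] at hm
      rcases eq_or_ne m k with rfl | hmj
      · exfalso
        rcases hval m0 with ⟨h, h', _⟩|⟨h', h⟩|⟨h', h⟩
        · rw [h] at h1 h2
          rw [← he] at h1 h2
          have : m ≤ m0 := dominance hp hj1 (by omega) (by omega) (by omega) h1 h2
          omega
        · rw [h] at h1 h2
          rw [← he] at h1 h2
          exact hkey ⟨h1, h2⟩
        · omega
      rcases eq_or_ne m (k+1) with rfl | hmj'
      · refine ⟨k, Set.mem_Icc.mpr ⟨hj1, le_refl k⟩, ?_⟩
        simp only [Function.comp_apply, hσj]; exact he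
      · refine ⟨m, Set.mem_Icc.mpr ⟨hm.1, by omega⟩, ?_⟩
        simp only [Function.comp_apply, hσo m hmj hmj']; exact he
    · have ht : 1 ≤ σ m0 ∧ σ m0 ≤ k := by
        rcases hval m0 with ⟨h, h', _⟩|⟨h', h⟩|⟨h', h⟩ <;> rw [h] <;> omega
      obtain ⟨m, hm, he⟩ := hp.2 k (by omega) (σ m0) (Set.mem_Icc.mpr ht) c h1 h2
      simp only [Set.mem_Icc] at hm
      have hσm : 1 ≤ σ m ∧ σ m ≤ k := by
        rcases hval m with ⟨h, h', _⟩|⟨h', h⟩|⟨h', h⟩ <;> rw [h] <;> omega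
      refine ⟨σ m, Set.mem_Icc.mpr hσm, ?_⟩
      simp only [Function.comp_apply]
      rw [show σ (σ m) = m from Equiv.swap_apply_self j (j+1) m]
      exact he

lemma nonadj1 {n i : ℕ} {p : ℕ → Cell} (hp : IsStdTab n p) (hi1 : 1 < i) (hi2 : i < n)
    (h : btwIn p (i + 1) i (i - 1)) :
    ¬((p (i-1)).1 ≤ (p i).1 ∧ (p (i-1)).2 ≤ (p i).2) := by
  rintro ⟨hb1, hb2⟩
  have hroc := row_or_col hp (show i = (i-1) + 1 by omega) (show 1 ≤ i - 1 by omega) (by omega) hb1 hb2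
  unfold btwIn readLt at h
  rcases hroc with ⟨hr, hc⟩ | ⟨hr, hc⟩
  · have hk : (p (i+1)).1 = (p i).1 ∧ (p (i+1)).2 ≤ (p i).2 := by omega
    have := dominance hp (show 1 ≤ i+1 by omega) (show i+1 ≤ n by omega)
      (show 1 ≤ i by omega) (show i ≤ n by omega)
      (show (p (i+1)).1 ≤ (p i).1 by omega) (show (p (i+1)).2 ≤ (p i).2 by omega)
    omega
  · have hcase : ((p (i+1)).1 = (p (i-1)).1 + 1 ∧ (p (i-1)).2 < (p (i+1)).2) ∨
        ((p (i+1)).1 = (p (i-1)).1 ∧ (p (i+1)).2 < (p (i-1)).2) := by omega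
    rcases hcase with ⟨h1', h2'⟩ | ⟨h1', h2'⟩
    · obtain ⟨m, hm, he⟩ := hp.2 (i+1) (by omega) (i+1) (Set.mem_Icc.mpr ⟨by omega, le_refl _⟩)
        ((p (i-1)).1, (p (i+1)).2) (show (p (i-1)).1 ≤ (p (i+1)).1 by omega)
        (le_refl ((p (i+1)).2))
      simp only [Set.mem_Icc] at hm
      have hm1 : (p m).1 = (p (i-1)).1 := by rw [he]
      have hm2 : (p m).2 = (p (i+1)).2 := by rw [he]
      have hd : i - 1 ≤ m := dominance hp (show 1 ≤ i-1 by omega) (show i-1 ≤ n by omega)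
        hm.1 (show m ≤ n by omega)
        (show (p (i-1)).1 ≤ (p m).1 by omega) (show (p (i-1)).2 ≤ (p m).2 by omega)
      have hmc : m = i - 1 ∨ m = i ∨ m = i + 1 := by omega
      rcases hmc with rfl | rfl | rfl <;> omega
    · obtain ⟨m, hm, he⟩ := hp.2 i (by omega) i (Set.mem_Icc.mpr ⟨by omega, le_refl _⟩)
        ((p (i-1)).1 + 1, (p (i+1)).2) (show (p (i-1)).1 + 1 ≤ (p i).1 by omega)
        (show (p (i+1)).2 ≤ (p i).2 by omega)
      simp only [Set.mem_Icc] at hm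
      have hm1 : (p m).1 = (p (i-1)).1 + 1 := by rw [he]
      have hm2 : (p m).2 = (p (i+1)).2 := by rw [he]
      have hd : i + 1 ≤ m := dominance hp (show 1 ≤ i+1 by omega) (show i+1 ≤ n by omega)
        hm.1 (show m ≤ n by omega)
        (show (p (i+1)).1 ≤ (p m).1 by omega) (show (p (i+1)).2 ≤ (p m).2 by omega)
      omega

lemma nonadj2 {n i : ℕ} {p : ℕ → Cell} (hp : IsStdTab n p) (hi1 : 1 < i) (hi2 : i < n)
    (h : btwIn p (i - 1) i (i + 1)) :
    ¬((p i).1 ≤ (p (i+1)).1 ∧ (p i).2 ≤ (p (i+1)).2) := by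
  rintro ⟨hb1, hb2⟩
  have hroc := row_or_col hp rfl (show 1 ≤ i by omega) (by omega) hb1 hb2
  unfold btwIn readLt at h
  rcases hroc with ⟨hr, hc⟩ | ⟨hr, hc⟩
  · have hk : (p (i-1)).1 = (p i).1 ∧ (p i).2 ≤ (p (i-1)).2 := by omega
    have := dominance hp (show 1 ≤ i by omega) (show i ≤ n by omega)
      (show 1 ≤ i-1 by omega) (show i-1 ≤ n by omega)
      (show (p i).1 ≤ (p (i-1)).1 by omega) (show (p i).2 ≤ (p (i-1)).2 by omega)
    omega
  · have hcase : ((p (i-1)).1 = (p i).1 + 1 ∧ (p (i+1)).2 ≤ (p (i-1)).2) ∨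
        ((p (i-1)).1 = (p i).1 ∧ (p (i-1)).2 < (p i).2) := by omega
    rcases hcase with ⟨h1', h2'⟩ | ⟨h1', h2'⟩
    · have := dominance hp (show 1 ≤ i+1 by omega) (show i+1 ≤ n by omega)
        (show 1 ≤ i-1 by omega) (show i-1 ≤ n by omega)
        (show (p (i+1)).1 ≤ (p (i-1)).1 by omega) (show (p (i+1)).2 ≤ (p (i-1)).2 by omega)
      omega
    · obtain ⟨m, hm, he⟩ := hp.2 (i+1) (by omega) (i+1) (Set.mem_Icc.mpr ⟨by omega, le_refl _⟩)
        ((p i).1 + 1, (p (i-1)).2) (show (p i).1 + 1 ≤ (p (i+1)).1 by omega)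
        (show (p (i-1)).2 ≤ (p (i+1)).2 by omega)
      simp only [Set.mem_Icc] at hm
      have hm1 : (p m).1 = (p i).1 + 1 := by rw [he]
      have hm2 : (p m).2 = (p (i-1)).2 := by rw [he]
      have hd : i - 1 ≤ m := dominance hp (show 1 ≤ i-1 by omega) (show i-1 ≤ n by omega)
        hm.1 (show m ≤ n by omega)
        (show (p (i-1)).1 ≤ (p m).1 by omega) (show (p (i-1)).2 ≤ (p m).2 by omega)
      have hmc : m = i - 1 ∨ m = i ∨ m = i + 1 := by omega
      rcases hmc with rfl | rfl | rfl <;> omega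

/-- For a standard Young tableau `T` with `n` boxes and `1 < i < n`, the result
`D_i(T)` of applying the elementary dual equivalence operator is again a
standard Young tableau. -/
theorem Dop_isStdTab (n i : ℕ) (hi1 : 1 < i) (hi2 : i < n)
    (p : ℕ → Cell) (hp : IsStdTab n p) : IsStdTab n (Dop i p) := by
  unfold Dop
  split_ifs with h1 h2
  · exact swap_std hp (by omega) (by omega) (by omega) (nonadj1 hp hi1 hi2 h1)
  · exact swap_std hp rfl (by omega) (by omega) (nonadj2 hp hi1 hi2 h2)
  · exact hp
end

section
/- For signed permutations w, v ∈ W^BC_n related by a D_2^r relation (i.e., v is obtained from w by swapping adjacent letters w_j and w_{j+1} of opposite signs for some 1 ≤ j ≤ r, with r ≥ 1), the recording r-domino tableau Q_D^r(v) is obtained from Q_D^r(w) by interchanging the labels j and j+1. -/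
/-- A domino, given by its top-left cell together with its orientation
(`true` = horizontal, `false` = vertical). -/
abbrev Dom := Cell × Bool

/-- The two cells covered by a domino. -/
def cellsD (d : Dom) : Finset Cell :=
  {d.1, if d.2 then (d.1.1, d.1.2 + 1) else (d.1.1 + 1, d.1.2)}

/-- A domino tableau, recorded as a list of (label, domino) pairs. -/
abbrev Tab := List (ℕ × Dom)

/-- The set of cells covered by the dominoes of a tableau. -/
def tabCells (T : Tab) : Finset Cell := (T.map (fun p => cellsD p.2)).foldr (· ∪ ·) ∅

/-- The cells of the staircase 2-core `δ_r = (r, r-1, ..., 1)`. -/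
def coreCells (r : ℕ) : Finset Cell :=
  (Finset.Icc 1 r ×ˢ Finset.Icc 1 r).filter (fun c => c.1 + c.2 ≤ r + 1)

/-- Garfinkle's bumping procedure: repeatedly merge the pair `(B, C)`, where at each
step the smallest labelled domino `γ_j` of `C` is adjoined to `B`, after being moved
according to how its cells overlap the shape of `B` (the four cases of the algorithm). -/
def bumpLoop (core : Finset Cell) : Tab → List (ℕ × Dom) → Tab
  | B, [] => B
  | B, (j, d) :: rest =>
    let Bc := core ∪ tabCells B
    let dc := cellsD d
    if dc ∩ Bc = ∅ then
      bumpLoop core (B ++ [(j, d)]) rest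
    else if (dc ∩ Bc).card = 1 then
      let o := if d.1 ∈ Bc then (if d.2 then (d.1.1, d.1.2 + 1) else (d.1.1 + 1, d.1.2)) else d.1
      bumpLoop core (B ++ [(j, (o, !d.2))]) rest
    else
      let nd : Dom := if d.2 then ((d.1.1 + 1, d.1.2), true) else ((d.1.1, d.1.2 + 1), false)
      bumpLoop core (B ++ [(j, nd)]) rest

/-- One more than the number of cells in row `r` of a shape: the column at which a new
horizontal domino is appended to the first row. -/
def rowEnd (cells : Finset Cell) (r : ℕ) : ℕ := (cells.filter (fun c => c.1 = r)).card + 1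

/-- One more than the number of cells in column `cl` of a shape: the row at which a new
vertical domino is appended to the first column. -/
def colEnd (cells : Finset Cell) (cl : ℕ) : ℕ := (cells.filter (fun c => c.2 = cl)).card + 1

/-- Garfinkle's domino insertion `T ← a` of a signed letter `a` into an `r`-domino
tableau `T`: start from `B` = the dominoes of `T` with labels `< |a|` together with a
new horizontal domino labelled `|a|` at the end of the first row (if `a > 0`) or a new
vertical domino at the end of the first column (if `a < 0`), and bump the remaining
dominoes of `T` back in, in increasing label order. -/
def dInsert (r : ℕ) (T : Tab) (a : ℤ) : Tab :=
  let i := a.natAbs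
  let B := T.filter (fun p => decide (p.1 < i))
  let C := T.filter (fun p => decide (i < p.1))
  let Bc := coreCells r ∪ tabCells B
  let nd : Dom := if 0 < a then ((1, rowEnd Bc 1), true) else ((colEnd Bc 1, 1), false)
  bumpLoop (coreCells r) (B ++ [(i, nd)]) C

/-- The insertion `r`-domino tableau `P_D^r(w)` of a signed word `w`. -/
def PD (r : ℕ) (w : List ℤ) : Tab := w.foldl (dInsert r) []

/-- The cells of the domino labelled `k` in the recording `r`-domino tableau
`Q_D^r(w)`: the cells added to the insertion tableau at the `k`-th step. -/
def Qcell (r : ℕ) (w : List ℤ) (k : ℕ) : Finset Cell :=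
  tabCells (PD r (w.take k)) \ tabCells (PD r (w.take (k - 1)))

/-- The cells of the domino labelled `i` in an insertion tableau. -/
def pcells (T : Tab) (i : ℕ) : Finset Cell :=
  ((T.filter (fun p => decide (p.1 = i))).map (fun p => cellsD p.2)).foldr (· ∪ ·) ∅

namespace D2R



theorem mem_tabCells {x : Cell} : ∀ {T : Tab}, x ∈ tabCells T ↔ ∃ p ∈ T, x ∈ cellsD p.2
  | [] => by simp [tabCells]
  | p :: T => by
    simp only [tabCells, List.map_cons, List.foldr_cons, Finset.mem_union, List.mem_cons]
    rw [show ((T.map (fun p => cellsD p.2)).foldr (· ∪ ·) ∅ : Finset Cell) = tabCells T from rfl]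
    rw [mem_tabCells (T := T)]
    constructor
    · rintro (h | ⟨q, hq, hx⟩)
      · exact ⟨p, Or.inl rfl, h⟩
      · exact ⟨q, Or.inr hq, hx⟩
    · rintro ⟨q, (rfl | hq), hx⟩
      · exact Or.inl hx
      · exact Or.inr ⟨q, hq, hx⟩

theorem mem_coreCells {r : ℕ} {x : Cell} :
    x ∈ coreCells r ↔ 1 ≤ x.1 ∧ 1 ≤ x.2 ∧ x.1 + x.2 ≤ r + 1 := by
  obtain ⟨a, b⟩ := x
  simp only [coreCells, Finset.mem_filter, Finset.mem_product, Finset.mem_Icc]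
  omega

/-! ### The abstract model -/

abbrev M := ℕ × ℕ × ℕ

def sh (h : ℕ) (p : M) : M := if p.2.2 = h then (p.1, p.2.1 + 1, p.2.2) else p

def mB (i : ℕ) (c : List M) : List M := c.filter (fun p => decide (p.1 < i))
def mC (i : ℕ) (c : List M) : List M := c.filter (fun p => decide (i < p.1))
def mh (i : ℕ) (c : List M) : ℕ := ((mB i c).filter (fun p => decide (p.2.1 = 1))).length
def mIns (i : ℕ) (c : List M) : List M :=
  mB i c ++ (i, 1, mh i c) :: (mC i c).map (sh (mh i c))

structure Minv (c : List M) : Prop where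
  sorted : c.Pairwise (fun p q => p.1 < q.1)
  rows : ∀ p ∈ c, 1 ≤ p.2.1
  posinj : ∀ p ∈ c, ∀ q ∈ c, p.2 = q.2 → p = q
  top : ∀ p ∈ c, ∀ x, p.2.1 = x + 1 → 1 ≤ x → ∃ q ∈ c, q.2 = (x, p.2.2)
  left1 : ∀ p ∈ c, ∀ k, p.2 = (1, k + 1) → ∃ q ∈ c, q.2 = (1, k)
  colmono : ∀ p ∈ c, ∀ q ∈ c, p.2.2 = q.2.2 → p.2.1 < q.2.1 → p.1 < q.1
  rowmono : ∀ p ∈ c, ∀ q ∈ c, p.2.1 = 1 → q.2.1 = 1 → p.2.2 < q.2.2 → p.1 < q.1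

theorem Minv.nil : Minv [] := by
  constructor <;> simp

theorem mem_mB {i : ℕ} {c : List M} {p : M} : p ∈ mB i c ↔ p ∈ c ∧ p.1 < i := by
  simp [mB]
theorem mem_mC {i : ℕ} {c : List M} {p : M} : p ∈ mC i c ↔ p ∈ c ∧ i < p.1 := by
  simp [mC]

theorem Minv.nodup {c : List M} (hc : Minv c) : c.Nodup :=
  hc.sorted.imp (fun h => by rintro rfl; omega)

theorem Minv.chain {c : List M} (hc : Minv c) :
    ∀ n, ∀ p ∈ c, p.2.1 ≤ n → ∀ x, 1 ≤ x → x ≤ p.2.1 → ∃ q ∈ c, q.2 = (x, p.2.2) := by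
  intro n
  induction n with
  | zero => intro p hp h0 x h1 h2; omega
  | succ n ih =>
    intro p hp h0 x h1 h2
    rcases eq_or_lt_of_le h2 with h | h
    · exact ⟨p, hp, by rw [h]⟩
    · have hx : p.2.1 = (p.2.1 - 1) + 1 := by omega
      obtain ⟨q, hq, hq2⟩ := hc.top p hp (p.2.1 - 1) hx (by omega)
      have hrow : q.2.1 = p.2.1 - 1 := by rw [hq2]
      have hcol : q.2.2 = p.2.2 := by rw [hq2]
      have := ih q hq (by omega) x h1 (by omega)
      rwa [hcol] at this

/-- downward closed list of distinct naturals -/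
theorem list_dc {l : List ℕ} (hnd : l.Nodup) (hdc : ∀ k, k + 1 ∈ l → k ∈ l) :
    ∀ x, x ∈ l ↔ x < l.length := by
  have hdc2 : ∀ k, k ∈ l.toFinset → ∀ j, j ≤ k → j ∈ l.toFinset := by
    intro k
    induction k with
    | zero => intro hk j hj; interval_cases j; exact hk
    | succ k ih =>
      intro hk j hj
      rcases Nat.eq_or_lt_of_le hj with rfl | hj
      · exact hk
      · exact ih (by simpa using hdc k (by simpa using hk)) j (by omega)
  have hsub : l.toFinset ⊆ Finset.range l.toFinset.card := by
    intro x hx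
    by_contra hxc
    simp only [Finset.mem_range, not_lt] at hxc
    have h1 : Finset.range (x + 1) ⊆ l.toFinset := by
      intro j hj
      exact hdc2 x hx j (by simpa [Nat.lt_succ_iff] using hj)
    have := Finset.card_le_card h1
    simp at this; omega
  have heq : l.toFinset = Finset.range l.toFinset.card :=
    Finset.eq_of_subset_of_card_le hsub (by simp)
  intro x
  rw [← List.mem_toFinset, heq, Finset.mem_range, List.toFinset_card_of_nodup hnd]

section ModelLemmas

variable {c : List M} {i : ℕ}

/-- Row-1 cells of the `<i` part occupy exactly the columns `< mh i c`. -/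
theorem R1 (hc : Minv c) :
    ∀ k, (∃ p ∈ c, p.1 < i ∧ p.2 = (1, k)) ↔ k < mh i c := by
  classical
  set l := ((mB i c).filter (fun p => decide (p.2.1 = 1))) with hl
  have hmem : ∀ p : M, p ∈ l ↔ p ∈ c ∧ p.1 < i ∧ p.2.1 = 1 := by
    intro p; simp only [hl, mB, List.mem_filter, decide_eq_true_eq]; tauto
  have hlnd : l.Nodup := ((hc.nodup.filter _).filter _)
  have hmapnd : (l.map (fun p => p.2.2)).Nodup := by
    refine List.Nodup.map_on ?_ hlnd
    intro p hp q hq hpq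
    have hp' := (hmem p).1 hp; have hq' := (hmem q).1 hq
    exact hc.posinj p hp'.1 q hq'.1 (Prod.ext (by omega) hpq)
  have hdc : ∀ k, k + 1 ∈ l.map (fun p => p.2.2) → k ∈ l.map (fun p => p.2.2) := by
    intro k hk
    simp only [List.mem_map] at hk ⊢
    obtain ⟨p, hp, hk⟩ := hk
    have hp' := (hmem p).1 hp
    obtain ⟨q, hq, hq2⟩ := hc.left1 p hp'.1 k (Prod.ext hp'.2.2 hk)
    have hql : q.1 < p.1 := by
      refine hc.rowmono q hq p hp'.1 (by rw [hq2]) hp'.2.2 ?_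
      have : q.2.2 = k := by rw [hq2]
      omega
    exact ⟨q, (hmem q).2 ⟨hq, by omega, by rw [hq2]⟩, by rw [hq2]⟩
  have hiff := list_dc hmapnd hdc
  intro k
  rw [mh, ← hl, ← List.length_map (as := l) (fun p => p.2.2), ← hiff k]
  simp only [List.mem_map]
  constructor
  · rintro ⟨p, hp, hpi, hp2⟩
    exact ⟨p, (hmem p).2 ⟨hp, hpi, by rw [hp2]⟩, by rw [hp2]⟩
  · rintro ⟨p, hp, hk⟩
    have hp' := (hmem p).1 hp
    exact ⟨p, hp'.1, hp'.2.1, Prod.ext hp'.2.2 hk⟩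

/-- every entry in column `mh i c` has label `> i`. -/
theorem R2 (hc : Minv c) (hfresh : ∀ p ∈ c, p.1 ≠ i) :
    ∀ p ∈ c, p.2.2 = mh i c → i < p.1 := by
  intro p hp hcol
  obtain ⟨q, hq, hq2⟩ := hc.chain p.2.1 p hp le_rfl 1 le_rfl (hc.rows p hp)
  have hq21 : q.2.1 = 1 := by rw [hq2]
  have hq22 : q.2.2 = p.2.2 := by rw [hq2]
  have hqi : i < q.1 := by
    rcases Nat.lt_trichotomy q.1 i with h | h | h
    · exfalso
      have : mh i c < mh i c := (R1 hc (mh i c)).1 ⟨q, hq, h, by rw [hq2, hcol]⟩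
      omega
    · exact absurd h (hfresh q hq)
    · exact h
  rcases Nat.lt_or_ge 1 p.2.1 with h | h
  · have := hc.colmono q hq p hp (by omega) (by omega)
    omega
  · have h1 := hc.rows p hp
    have hq2p : q.2 = p.2 := by
      rw [hq2]; exact Prod.ext (by omega) rfl
    rw [hc.posinj q hq p hp hq2p] at hqi
    exact hqi

/-- column occupancy: column `k` of `c` is occupied exactly in rows `1..len`. -/
theorem CH (hc : Minv c) (k : ℕ) :
    ∀ x, (∃ p ∈ c, p.2 = (x, k)) ↔ 1 ≤ x ∧ x ≤ (c.filter (fun p => decide (p.2.2 = k))).length := by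
  classical
  set l := c.filter (fun p => decide (p.2.2 = k)) with hl
  have hmem : ∀ p : M, p ∈ l ↔ p ∈ c ∧ p.2.2 = k := by intro p; simp [hl]
  have hlnd : l.Nodup := hc.nodup.filter _
  have hmapnd : (l.map (fun p => p.2.1 - 1)).Nodup := by
    refine List.Nodup.map_on ?_ hlnd
    intro p hp q hq hpq
    have hp' := (hmem p).1 hp; have hq' := (hmem q).1 hq
    have h1 := hc.rows p hp'.1; have h2 := hc.rows q hq'.1
    exact hc.posinj p hp'.1 q hq'.1 (Prod.ext (by omega) (by omega))
  have hdc : ∀ x, x + 1 ∈ l.map (fun p => p.2.1 - 1) → x ∈ l.map (fun p => p.2.1 - 1) := by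
    intro x hx
    simp only [List.mem_map] at hx ⊢
    obtain ⟨p, hp, hx⟩ := hx
    have hp' := (hmem p).1 hp
    obtain ⟨q, hq, hq2⟩ := hc.top p hp'.1 (x + 1) (by omega) (by omega)
    refine ⟨q, (hmem q).2 ⟨hq, by rw [hq2]; exact hp'.2⟩, by simp [hq2]⟩
  have hiff := list_dc hmapnd hdc
  intro x
  rw [← List.length_map (as := l) (fun p => p.2.1 - 1)]
  constructor
  · rintro ⟨p, hp, hp2⟩
    have h1 := hc.rows p hp
    have hpx : p.2.1 = x := by rw [hp2]
    have hx1 : 1 ≤ x := by omega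
    have : x - 1 < (l.map (fun p => p.2.1 - 1)).length := by
      rw [← hiff]
      simp only [List.mem_map]
      exact ⟨p, (hmem p).2 ⟨hp, by rw [hp2]⟩, by rw [hp2]⟩
    omega
  · rintro ⟨hx1, hx2⟩
    have : x - 1 ∈ l.map (fun p => p.2.1 - 1) := by rw [hiff]; omega
    simp only [List.mem_map] at this
    obtain ⟨p, hp, hx⟩ := this
    have hp' := (hmem p).1 hp
    have := hc.rows p hp'.1
    exact ⟨p, hp'.1, Prod.ext (by omega) hp'.2⟩

theorem mC_sorted (hc : Minv c) : (mC i c).Pairwise (fun p q : M => p.1 < q.1) :=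
  hc.sorted.sublist (List.filter_sublist (l := c))

/-- The key occupancy characterization (L3). -/
theorem key (hc : Minv c) (hfresh : ∀ p ∈ c, p.1 ≠ i) :
    ∀ C₁ (e : M) C₂, mC i c = C₁ ++ e :: C₂ →
      ((∃ q ∈ (mB i c ++ [(i, 1, mh i c)]) ++ C₁.map (sh (mh i c)), q.2 = e.2) ↔
        e.2.2 = mh i c) := by
  intro C₁ e C₂ hsplit
  have hCs := mC_sorted (i := i) hc
  rw [hsplit] at hCs
  have heC : e ∈ mC i c := by rw [hsplit]; simp
  have hec : e ∈ c := (mem_mC.1 heC).1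
  have hei : i < e.1 := (mem_mC.1 heC).2
  have hC₁lt : ∀ q ∈ C₁, q.1 < e.1 := by
    intro q hq
    have := (List.pairwise_append.1 hCs).2.2 q hq e (by simp)
    exact this
  constructor
  · rintro ⟨q, hq, hq2⟩
    rcases List.mem_append.1 hq with hq' | hq'
    · rcases List.mem_append.1 hq' with hq'' | hq''
      · exfalso
        obtain ⟨hqc, hqi⟩ := mem_mB.1 hq''
        have hqe : q = e := hc.posinj q hqc e hec hq2
        have : q.1 = e.1 := by rw [hqe]
        omega
      · simp only [List.mem_singleton] at hq''
        subst hq''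
        rw [← hq2]
    · obtain ⟨q', hq'm, rfl⟩ := List.mem_map.1 hq'
      by_cases hcol : q'.2.2 = mh i c
      · have : (sh (mh i c) q').2.2 = mh i c := by simp [sh, hcol]
        rw [hq2] at this; exact this
      · rw [show sh (mh i c) q' = q' from by simp [sh, hcol]] at hq2
        have hq'c : q' ∈ c := by
          have : q' ∈ mC i c := by rw [hsplit]; exact List.mem_append.2 (Or.inl hq'm)
          exact (mem_mC.1 this).1
        have hqe : q' = e := hc.posinj q' hq'c e hec hq2
        have h1 : q'.1 = e.1 := by rw [hqe]
        have := hC₁lt q' hq'm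
        omega
  · intro hcol
    rcases Nat.lt_or_ge 1 e.2.1 with hrow | hrow
    · obtain ⟨q, hq, hq2⟩ := hc.top e hec (e.2.1 - 1) (by omega) (by omega)
      have hqrow : q.2.1 = e.2.1 - 1 := by rw [hq2]
      have hqcol : q.2.2 = e.2.2 := by rw [hq2]
      have hqi : i < q.1 := R2 hc hfresh q hq (by omega)
      have hqlt : q.1 < e.1 := hc.colmono q hq e hec (by omega) (by omega)
      have hqC : q ∈ mC i c := mem_mC.2 ⟨hq, hqi⟩
      rw [hsplit] at hqC
      have hqC₁ : q ∈ C₁ := by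
        rcases List.mem_append.1 hqC with h | h
        · exact h
        · rcases List.mem_cons.1 h with rfl | h
          · omega
          · exfalso
            have := (List.pairwise_cons.1 (List.pairwise_append.1 hCs).2.1).1 q h
            omega
      refine ⟨sh (mh i c) q, ?_, ?_⟩
      · simp only [List.mem_append, List.mem_map]
        right; exact ⟨q, hqC₁, rfl⟩
      · have hshq : sh (mh i c) q = (q.1, q.2.1 + 1, q.2.2) := by
          simp [sh, hqcol, hcol]
        rw [hshq]
        refine Prod.ext ?_ ?_ <;> simp only [] <;> omega
    · have h1 := hc.rows e hec
      refine ⟨(i, 1, mh i c), by simp, ?_⟩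
      refine Prod.ext ?_ ?_ <;> simp only [] <;> omega

end ModelLemmas

section Pres

variable {c : List M} {i : ℕ}

theorem sh_fst (h : ℕ) (p : M) : (sh h p).1 = p.1 := by unfold sh; split <;> rfl
theorem sh_col (h : ℕ) (p : M) : (sh h p).2.2 = p.2.2 := by unfold sh; split <;> rfl
theorem sh_eq (h : ℕ) (p : M) (hp : p.2.2 = h) : sh h p = (p.1, p.2.1 + 1, p.2.2) := by
  unfold sh; rw [if_pos hp]
theorem sh_id (h : ℕ) (p : M) (hp : p.2.2 ≠ h) : sh h p = p := by
  unfold sh; rw [if_neg hp]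

theorem mem_mIns {p : M} : p ∈ mIns i c ↔
    p ∈ mB i c ∨ p = (i, 1, mh i c) ∨ ∃ q ∈ mC i c, sh (mh i c) q = p := by
  simp [mIns]

theorem hBnocol (hc : Minv c) (hfresh : ∀ p ∈ c, p.1 ≠ i) :
    ∀ p ∈ c, p.1 < i → p.2.2 ≠ mh i c := by
  intro p hp hpi hcol
  have := R2 hc hfresh p hp hcol
  omega

theorem hBnotnew (hc : Minv c) : ∀ p ∈ c, p.1 < i → p.2 ≠ (1, mh i c) := by
  intro p hp hpi hpos
  have : mh i c < mh i c := (R1 hc (mh i c)).1 ⟨p, hp, hpi, hpos⟩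
  omega

theorem minv_mIns (hc : Minv c) (hfresh : ∀ p ∈ c, p.1 ≠ i) : Minv (mIns i c) := by
  have hR2 := R2 hc hfresh
  have hnocol := hBnocol hc hfresh
  have hnotnew := hBnotnew (i := i) hc
  -- auxiliary position disjointness
  have auxB_sh : ∀ p ∈ c, p.1 < i → ∀ q ∈ mC i c, p.2 ≠ (sh (mh i c) q).2 := by
    intro p hp hpi q hq hpq
    by_cases hq2 : q.2.2 = mh i c
    · rw [sh_eq _ _ hq2] at hpq
      exact hnocol p hp hpi (by rw [hpq]; simpa using hq2)
    · rw [sh_id _ _ hq2] at hpq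
      obtain ⟨hqc, hqi⟩ := mem_mC.1 hq
      have : p = q := hc.posinj p hp q hqc hpq
      subst this; omega
  have aux_new_sh : ∀ q ∈ mC i c, ((i, 1, mh i c) : M).2 ≠ (sh (mh i c) q).2 := by
    intro q hq hpq
    obtain ⟨hqc, hqi⟩ := mem_mC.1 hq
    by_cases hq2 : q.2.2 = mh i c
    · rw [sh_eq _ _ hq2] at hpq
      have h1 := hc.rows q hqc
      have : (1 : ℕ) = q.2.1 + 1 := congrArg Prod.fst hpq
      omega
    · rw [sh_id _ _ hq2] at hpq
      exact hq2 (by rw [← hpq])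
  have aux_sh_inj : ∀ p ∈ mC i c, ∀ q ∈ mC i c, (sh (mh i c) p).2 = (sh (mh i c) q).2 → p = q := by
    intro p hp q hq hpq
    obtain ⟨hpc, hpi⟩ := mem_mC.1 hp
    obtain ⟨hqc, hqi⟩ := mem_mC.1 hq
    by_cases hp2 : p.2.2 = mh i c <;> by_cases hq2 : q.2.2 = mh i c
    · rw [sh_eq _ _ hp2, sh_eq _ _ hq2] at hpq
      have h1 : p.2.1 + 1 = q.2.1 + 1 := congrArg Prod.fst hpq
      have h2 : p.2.2 = q.2.2 := congrArg (fun z => z.2) hpq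
      exact hc.posinj p hpc q hqc (Prod.ext (by omega) h2)
    · exfalso
      rw [sh_eq _ _ hp2, sh_id _ _ hq2] at hpq
      exact hq2 (by rw [← hpq, hp2])
    · exfalso
      rw [sh_id _ _ hp2, sh_eq _ _ hq2] at hpq
      exact hp2 (by rw [hpq, hq2])
    · rw [sh_id _ _ hp2, sh_id _ _ hq2] at hpq
      exact hc.posinj p hpc q hqc hpq
  constructor
  · -- sorted
    rw [mIns, List.pairwise_append]
    refine ⟨hc.sorted.sublist (List.filter_sublist (l := c)), ?_, ?_⟩
    · rw [List.pairwise_cons]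
      constructor
      · intro q hq
        obtain ⟨q', hq', rfl⟩ := List.mem_map.1 hq
        rw [sh_fst]
        exact (mem_mC.1 hq').2
      · rw [List.pairwise_map]
        refine (mC_sorted hc).imp ?_
        intro a b hab
        rwa [sh_fst, sh_fst]
    · intro a ha b hb
      have hai : a.1 < i := (mem_mB.1 ha).2
      rcases List.mem_cons.1 hb with rfl | hb
      · exact hai
      · obtain ⟨q', hq', rfl⟩ := List.mem_map.1 hb
        rw [sh_fst]
        have := (mem_mC.1 hq').2
        omega
  · -- rows
    intro p hp
    rcases mem_mIns.1 hp with h | h | ⟨q, hq, rfl⟩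
    · exact hc.rows p (mem_mB.1 h).1
    · rw [h]
    · have := hc.rows q (mem_mC.1 hq).1
      by_cases hq2 : q.2.2 = mh i c
      · have h2 : (sh (mh i c) q).2.1 = q.2.1 + 1 := by rw [sh_eq _ _ hq2]
        omega
      · rwa [sh_id _ _ hq2]
  · -- posinj
    intro p hp q hq hpq
    rcases mem_mIns.1 hp with h1 | h1 | ⟨a, ha, rfl⟩ <;>
      rcases mem_mIns.1 hq with h2 | h2 | ⟨b, hb, rfl⟩
    · exact hc.posinj p (mem_mB.1 h1).1 q (mem_mB.1 h2).1 hpq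
    · exact absurd (hpq.trans (by rw [h2])) (hnotnew p (mem_mB.1 h1).1 (mem_mB.1 h1).2)
    · exact absurd hpq (auxB_sh p (mem_mB.1 h1).1 (mem_mB.1 h1).2 b hb)
    · exact absurd (hpq.symm.trans (by rw [h1])) (hnotnew q (mem_mB.1 h2).1 (mem_mB.1 h2).2)
    · rw [h1, h2]
    · rw [h1] at hpq ⊢
      exact absurd hpq (aux_new_sh b hb)
    · exact absurd hpq.symm (auxB_sh q (mem_mB.1 h2).1 (mem_mB.1 h2).2 a ha)
    · rw [h2] at hpq ⊢
      exact absurd hpq.symm (aux_new_sh a ha)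
    · rw [aux_sh_inj a ha b hb hpq]
  · -- top
    intro p hp x hx h1x
    rcases mem_mIns.1 hp with h1 | h1 | ⟨a, ha, rfl⟩
    · obtain ⟨hpc, hpi⟩ := mem_mB.1 h1
      obtain ⟨q, hq, hq2⟩ := hc.top p hpc x hx h1x
      rcases Nat.lt_trichotomy q.1 i with hqi | hqi | hqi
      · exact ⟨q, mem_mIns.2 (Or.inl (mem_mB.2 ⟨hq, hqi⟩)), hq2⟩
      · exact absurd hqi (hfresh q hq)
      · have hqcol : q.2.2 ≠ mh i c := by
          have : q.2.2 = p.2.2 := by rw [hq2]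
          rw [this]; exact hnocol p hpc hpi
        refine ⟨q, mem_mIns.2 (Or.inr (Or.inr ⟨q, mem_mC.2 ⟨hq, hqi⟩, sh_id _ _ hqcol⟩)), hq2⟩
    · exfalso
      have : p.2.1 = 1 := by rw [h1]
      omega
    · obtain ⟨hac, hai⟩ := mem_mC.1 ha
      by_cases ha2 : a.2.2 = mh i c
      · have hshrow : (sh (mh i c) a).2.1 = a.2.1 + 1 := by rw [sh_eq _ _ ha2]
        have hshcol : (sh (mh i c) a).2.2 = a.2.2 := sh_col _ _
        have harow : a.2.1 = x := by omega
        rcases Nat.lt_or_ge 1 a.2.1 with hrow | hrow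
        · obtain ⟨q, hq, hq2⟩ := hc.top a hac (a.2.1 - 1) (by omega) (by omega)
          have hqrow : q.2.1 = a.2.1 - 1 := by rw [hq2]
          have hqcol : q.2.2 = a.2.2 := by rw [hq2]
          have h3 : q.2.2 = mh i c := by rw [hqcol, ha2]
          have hqi : i < q.1 := hR2 q hq h3
          refine ⟨sh (mh i c) q, mem_mIns.2 (Or.inr (Or.inr ⟨q, mem_mC.2 ⟨hq, hqi⟩, rfl⟩)), ?_⟩
          have hr : (sh (mh i c) q).2.1 = q.2.1 + 1 := by rw [sh_eq _ _ h3]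
          have hcc : (sh (mh i c) q).2.2 = q.2.2 := sh_col _ _
          refine Prod.ext ?_ ?_
          · show (sh (mh i c) q).2.1 = x
            omega
          · show (sh (mh i c) q).2.2 = (sh (mh i c) a).2.2
            omega
        · have h1 := hc.rows a hac
          refine ⟨(i, 1, mh i c), mem_mIns.2 (Or.inr (Or.inl rfl)), ?_⟩
          refine Prod.ext ?_ ?_
          · show (1 : ℕ) = x
            omega
          · show mh i c = (sh (mh i c) a).2.2
            omega
      · rw [sh_id _ _ ha2] at hx ⊢
        obtain ⟨q, hq, hq2⟩ := hc.top a hac x hx h1x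
        rcases Nat.lt_trichotomy q.1 i with hqi | hqi | hqi
        · exact ⟨q, mem_mIns.2 (Or.inl (mem_mB.2 ⟨hq, hqi⟩)), hq2⟩
        · exact absurd hqi (hfresh q hq)
        · have hqcol : q.2.2 ≠ mh i c := by
            have : q.2.2 = a.2.2 := by rw [hq2]
            rw [this]; exact ha2
          exact ⟨q, mem_mIns.2 (Or.inr (Or.inr ⟨q, mem_mC.2 ⟨hq, hqi⟩, sh_id _ _ hqcol⟩)), hq2⟩
  · -- left1
    intro p hp k hk
    rcases mem_mIns.1 hp with h1 | h1 | ⟨a, ha, rfl⟩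
    · obtain ⟨hpc, hpi⟩ := mem_mB.1 h1
      obtain ⟨q, hq, hq2⟩ := hc.left1 p hpc k hk
      rcases Nat.lt_trichotomy q.1 i with hqi | hqi | hqi
      · exact ⟨q, mem_mIns.2 (Or.inl (mem_mB.2 ⟨hq, hqi⟩)), hq2⟩
      · exact absurd hqi (hfresh q hq)
      · by_cases hkh : k = mh i c
        · refine ⟨(i, 1, mh i c), mem_mIns.2 (Or.inr (Or.inl rfl)), by simp [hkh]⟩
        · have hqcol : q.2.2 ≠ mh i c := by
            have : q.2.2 = k := by rw [hq2]
            rw [this]; exact hkh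
          exact ⟨q, mem_mIns.2 (Or.inr (Or.inr ⟨q, mem_mC.2 ⟨hq, hqi⟩, sh_id _ _ hqcol⟩)), hq2⟩
    · have e1 : p.2.2 = mh i c := by rw [h1]
      have e2 : p.2.2 = k + 1 := by rw [hk]
      obtain ⟨q, hq, hqi, hq2⟩ := (R1 (i := i) hc k).2 (by omega)
      exact ⟨q, mem_mIns.2 (Or.inl (mem_mB.2 ⟨hq, hqi⟩)), hq2⟩
    · obtain ⟨hac, hai⟩ := mem_mC.1 ha
      by_cases ha2 : a.2.2 = mh i c
      · exfalso
        rw [sh_eq _ _ ha2] at hk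
        have h1 := hc.rows a hac
        have : a.2.1 + 1 = 1 := congrArg Prod.fst hk
        omega
      · rw [sh_id _ _ ha2] at hk
        obtain ⟨q, hq, hq2⟩ := hc.left1 a hac k hk
        rcases Nat.lt_trichotomy q.1 i with hqi | hqi | hqi
        · exact ⟨q, mem_mIns.2 (Or.inl (mem_mB.2 ⟨hq, hqi⟩)), hq2⟩
        · exact absurd hqi (hfresh q hq)
        · by_cases hkh : k = mh i c
          · exact ⟨(i, 1, mh i c), mem_mIns.2 (Or.inr (Or.inl rfl)), by simp [hkh]⟩
          · have hqcol : q.2.2 ≠ mh i c := by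
              have : q.2.2 = k := by rw [hq2]
              rw [this]; exact hkh
            exact ⟨q, mem_mIns.2 (Or.inr (Or.inr ⟨q, mem_mC.2 ⟨hq, hqi⟩, sh_id _ _ hqcol⟩)), hq2⟩
  · -- colmono
    intro p hp q hq hcol hrow
    rcases mem_mIns.1 hp with h1 | h1 | ⟨a, ha, rfl⟩ <;>
      rcases mem_mIns.1 hq with h2 | h2 | ⟨b, hb, rfl⟩
    · exact hc.colmono p (mem_mB.1 h1).1 q (mem_mB.1 h2).1 hcol hrow
    · have : q.1 = i := by rw [h2]
      have := (mem_mB.1 h1).2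
      omega
    · have := (mem_mB.1 h1).2
      have : b.1 ≤ (sh (mh i c) b).1 := by rw [sh_fst]
      have := (mem_mC.1 hb).2
      rw [sh_fst]
      omega
    · exfalso
      rw [h1] at hcol
      exact hBnocol hc hfresh q (mem_mB.1 h2).1 (mem_mB.1 h2).2 (by rw [← hcol])
    · exfalso
      rw [h1, h2] at hrow
      omega
    · rw [h1, sh_fst]
      exact (mem_mC.1 hb).2
    · -- p = sh a, q ∈ mB
      exfalso
      obtain ⟨hac, hai⟩ := mem_mC.1 ha
      obtain ⟨hqc, hqi⟩ := mem_mB.1 h2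
      by_cases ha2 : a.2.2 = mh i c
      · refine hBnocol hc hfresh q hqc hqi ?_
        rw [← hcol, sh_col, ha2]
      · rw [sh_id _ _ ha2] at hcol hrow
        have := hc.colmono a hac q hqc hcol hrow
        omega
    · exfalso
      obtain ⟨hac, hai⟩ := mem_mC.1 ha
      have h1 : q.2.1 = 1 := by rw [h2]
      have := hc.rows a hac
      by_cases ha2 : a.2.2 = mh i c
      · rw [sh_eq _ _ ha2] at hrow
        simp only at hrow
        omega
      · rw [sh_id _ _ ha2] at hrow
        omega
    · obtain ⟨hac, hai⟩ := mem_mC.1 ha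
      obtain ⟨hbc, hbi⟩ := mem_mC.1 hb
      rw [sh_fst, sh_fst]
      by_cases ha2 : a.2.2 = mh i c <;> by_cases hb2 : b.2.2 = mh i c
      · rw [sh_eq _ _ ha2] at hcol hrow
        rw [sh_eq _ _ hb2] at hcol hrow
        simp only at hcol hrow
        exact hc.colmono a hac b hbc (by omega) (by omega)
      · exfalso
        rw [sh_col, sh_col] at hcol
        rw [hcol] at ha2
        rw [ha2] at hb2
        exact hb2 rfl
      · exfalso
        rw [sh_col, sh_col] at hcol
        rw [hcol] at ha2
        exact ha2 hb2
      · rw [sh_id _ _ ha2] at hcol hrow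
        rw [sh_id _ _ hb2] at hcol hrow
        exact hc.colmono a hac b hbc hcol hrow
  · -- rowmono
    intro p hp q hq hp1 hq1 hcol
    have structure1 : ∀ p' : M, p' ∈ mIns i c → p'.2.1 = 1 →
        (p' ∈ c ∧ p'.1 < i ∧ p'.2.2 < mh i c) ∨ (p' = (i, 1, mh i c)) ∨
        (p' ∈ c ∧ i < p'.1 ∧ mh i c < p'.2.2) := by
      intro p' hp' h1
      rcases mem_mIns.1 hp' with h | h | ⟨a, ha, rfl⟩
      · obtain ⟨hpc, hpi⟩ := mem_mB.1 h
        refine Or.inl ⟨hpc, hpi, ?_⟩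
        have := (R1 hc p'.2.2).1 ⟨p', hpc, hpi, Prod.ext h1 rfl⟩
        exact this
      · exact Or.inr (Or.inl h)
      · obtain ⟨hac, hai⟩ := mem_mC.1 ha
        by_cases ha2 : a.2.2 = mh i c
        · exfalso
          rw [sh_eq _ _ ha2] at h1
          have := hc.rows a hac
          simp only at h1
          omega
        · rw [sh_id _ _ ha2] at h1 ⊢
          refine Or.inr (Or.inr ⟨hac, hai, ?_⟩)
          rcases Nat.lt_trichotomy a.2.2 (mh i c) with hlt | heq | hgt
          · exfalso
            obtain ⟨b, hbc, hbi, hb2⟩ := (R1 hc a.2.2).2 hlt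
            have : b = a := hc.posinj b hbc a hac (by rw [hb2]; exact (Prod.ext h1.symm rfl))
            subst this; omega
          · exact absurd heq ha2
          · exact hgt
    rcases structure1 p hp hp1 with hP | hP | hP <;> rcases structure1 q hq hq1 with hQ | hQ | hQ
    · exact hc.rowmono p hP.1 q hQ.1 hp1 hq1 hcol
    · rw [hQ]; exact hP.2.1
    · exact hP.2.1.trans hQ.2.1
    · exfalso
      have : p.2.2 = mh i c := by rw [hP]
      omega
    · exfalso; rw [hP, hQ] at hcol; omega
    · rw [hP]; exact hQ.2.1
    · exfalso; omega
    · exfalso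
      have : q.2.2 = mh i c := by rw [hQ]
      omega
    · exact hc.rowmono p hP.1 q hQ.1 hp1 hq1 hcol

end Pres

section Growth

variable {c : List M} {i : ℕ}

/-- the new position created by a model insertion -/
def newP (i : ℕ) (c : List M) : ℕ × ℕ :=
  ((c.filter (fun p => decide (p.2.2 = mh i c))).length + 1, mh i c)

theorem newP_fresh (hc : Minv c) : ¬ ∃ p ∈ c, p.2 = newP i c := by
  rintro ⟨p, hp, hp2⟩
  have := (CH hc (mh i c) ((c.filter (fun p => decide (p.2.2 = mh i c))).length + 1)).1 ⟨p, hp, hp2⟩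
  omega

theorem mIns_pos (hc : Minv c) (hfresh : ∀ p ∈ c, p.1 ≠ i) :
    ∀ z : ℕ × ℕ, (∃ p ∈ mIns i c, p.2 = z) ↔ (∃ p ∈ c, p.2 = z) ∨ z = newP i c := by
  have hR2 := R2 hc hfresh
  set L := (c.filter (fun p => decide (p.2.2 = mh i c))).length with hL
  intro z
  constructor
  · rintro ⟨p, hp, rfl⟩
    rcases mem_mIns.1 hp with h | h | ⟨a, ha, rfl⟩
    · exact Or.inl ⟨p, (mem_mB.1 h).1, rfl⟩
    · rcases Nat.eq_zero_or_pos L with hL0 | hL0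
      · refine Or.inr ?_
        rw [h, newP, ← hL, hL0]
      · refine Or.inl ?_
        obtain ⟨q, hq, hq2⟩ := (CH hc (mh i c) 1).2 ⟨le_rfl, by omega⟩
        exact ⟨q, hq, by rw [hq2, h]⟩
    · obtain ⟨hac, hai⟩ := mem_mC.1 ha
      by_cases ha2 : a.2.2 = mh i c
      · have hle : a.2.1 ≤ L := by
          have := (CH hc (mh i c) a.2.1).1 ⟨a, hac, Prod.ext rfl ha2⟩
          omega
        rcases Nat.lt_or_ge a.2.1 L with hlt | hge
        · refine Or.inl ?_
          obtain ⟨q, hq, hq2⟩ := (CH hc (mh i c) (a.2.1 + 1)).2 ⟨by omega, by omega⟩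
          refine ⟨q, hq, ?_⟩
          rw [hq2, sh_eq _ _ ha2]
          exact Prod.ext rfl (by simpa using ha2.symm)
        · refine Or.inr ?_
          rw [sh_eq _ _ ha2, newP, ← hL]
          exact Prod.ext (by show a.2.1 + 1 = L + 1; omega) (by simpa using ha2)
      · exact Or.inl ⟨a, hac, by rw [sh_id _ _ ha2]⟩
  · rintro (⟨p, hp, rfl⟩ | rfl)
    · rcases Nat.lt_trichotomy p.1 i with hpi | hpi | hpi
      · exact ⟨p, mem_mIns.2 (Or.inl (mem_mB.2 ⟨hp, hpi⟩)), rfl⟩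
      · exact absurd hpi (hfresh p hp)
      · by_cases hp2 : p.2.2 = mh i c
        · rcases Nat.lt_or_ge 1 p.2.1 with hrow | hrow
          · obtain ⟨q, hq, hq2⟩ := hc.top p hp (p.2.1 - 1) (by omega) (by omega)
            have hq1 : q.2.1 = p.2.1 - 1 := by rw [hq2]
            have hq22 : q.2.2 = p.2.2 := by rw [hq2]
            have hqi : i < q.1 := hR2 q hq (by omega)
            refine ⟨sh (mh i c) q, mem_mIns.2 (Or.inr (Or.inr ⟨q, mem_mC.2 ⟨hq, hqi⟩, rfl⟩)), ?_⟩
            have h3 : q.2.2 = mh i c := by omega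
            have hr : (sh (mh i c) q).2.1 = q.2.1 + 1 := by rw [sh_eq _ _ h3]
            have hcc : (sh (mh i c) q).2.2 = q.2.2 := sh_col _ _
            exact Prod.ext (by omega) (by omega)
          · have h1 := hc.rows p hp
            refine ⟨(i, 1, mh i c), mem_mIns.2 (Or.inr (Or.inl rfl)), ?_⟩
            exact Prod.ext (by show (1 : ℕ) = p.2.1; omega) (by show mh i c = p.2.2; omega)
        · exact ⟨p, mem_mIns.2 (Or.inr (Or.inr ⟨p, mem_mC.2 ⟨hp, hpi⟩, sh_id _ _ hp2⟩)), rfl⟩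
    · rcases Nat.eq_zero_or_pos L with hL0 | hL0
      · refine ⟨(i, 1, mh i c), mem_mIns.2 (Or.inr (Or.inl rfl)), ?_⟩
        rw [newP, ← hL, hL0]
      · obtain ⟨q, hq, hq2⟩ := (CH hc (mh i c) L).2 ⟨by omega, le_rfl⟩
        have hq1 : q.2.1 = L := by rw [hq2]
        have hq22 : q.2.2 = mh i c := by rw [hq2]
        have hqi : i < q.1 := hR2 q hq hq22
        refine ⟨sh (mh i c) q, mem_mIns.2 (Or.inr (Or.inr ⟨q, mem_mC.2 ⟨hq, hqi⟩, rfl⟩)), ?_⟩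
        have hr : (sh (mh i c) q).2.1 = q.2.1 + 1 := by rw [sh_eq _ _ hq22]
        have hcc : (sh (mh i c) q).2.2 = q.2.2 := sh_col _ _
        rw [newP, ← hL]
        exact Prod.ext (by show _ = L + 1; omega) (by show _ = mh i c; omega)

theorem mIns_bound {t : ℕ} (hb : ∀ p ∈ c, p.2.1 ≤ t) :
    ∀ p ∈ mIns i c, p.2.1 ≤ t + 1 := by
  intro p hp
  rcases mem_mIns.1 hp with h | h | ⟨a, ha, rfl⟩
  · have := hb p (mem_mB.1 h).1
    omega
  · have : p.2.1 = 1 := by rw [h]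
    omega
  · have := hb a (mem_mC.1 ha).1
    by_cases ha2 : a.2.2 = mh i c
    · have h2 : (sh (mh i c) a).2.1 = a.2.1 + 1 := by rw [sh_eq _ _ ha2]
      omega
    · rw [sh_id _ _ ha2]; omega

theorem mIns_label : ∀ p ∈ mIns i c, p.1 = i ∨ p.1 ∈ c.map (fun q => q.1) := by
  intro p hp
  rcases mem_mIns.1 hp with h | h | ⟨a, ha, rfl⟩
  · exact Or.inr (List.mem_map.2 ⟨p, (mem_mB.1 h).1, rfl⟩)
  · left; rw [h]
  · rw [sh_fst]
    exact Or.inr (List.mem_map.2 ⟨a, (mem_mC.1 ha).1, rfl⟩)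

end Growth

/-! ### splitting sorted lists -/

theorem sorted_split {α : Type*} (key : α → ℕ) (i : ℕ) :
    ∀ l : List α, l.Pairwise (fun a b => key a < key b) → (∀ a ∈ l, key a ≠ i) →
      l.filter (fun a => decide (key a < i)) ++ l.filter (fun a => decide (i < key a)) = l := by
  intro l
  induction l with
  | nil => simp
  | cons p l ih =>
    intro hp hni
    have hpl := List.pairwise_cons.1 hp
    rcases (hni p (by simp)).lt_or_gt with h | h
    · rw [List.filter_cons_of_pos (by simpa using h),
        List.filter_cons_of_neg (by simp; omega)]
      rw [List.cons_append, ih hpl.2 (fun a ha => hni a (by simp [ha]))]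
    · rw [List.filter_cons_of_neg (by simp; omega),
        List.filter_cons_of_pos (by simpa using h)]
      have h1 : l.filter (fun a => decide (key a < i)) = [] := by
        rw [List.filter_eq_nil_iff]
        intro a ha
        have := hpl.1 a ha
        simp; omega
      have h2 : l.filter (fun a => decide (i < key a)) = l := by
        rw [List.filter_eq_self]
        intro a ha
        have := hpl.1 a ha
        simp; omega
      rw [h1, h2, List.nil_append]

/-! ### interleavings -/

inductive Ilv (f g : M → ℕ × Dom) : Tab → List M → List M → Prop
  | nil : Ilv f g [] [] []
  | consf {L A S} (a : M) : Ilv f g L A S → Ilv f g (f a :: L) (a :: A) S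
  | consg {L A S} (s : M) : Ilv f g L A S → Ilv f g (g s :: L) A (s :: S)

namespace Ilv

theorem perm {f g : M → ℕ × Dom} {L A S} (h : Ilv f g L A S) :
    L.Perm (A.map f ++ S.map g) := by
  induction h with
  | nil => simp
  | consf a _ ih => simpa using ih.cons (f a)
  | consg s _ ih =>
    refine (ih.cons (g s)).trans ?_
    simpa using List.perm_middle.symm

theorem append {f g : M → ℕ × Dom} {L A S L' A' S'} (h : Ilv f g L A S)
    (h' : Ilv f g L' A' S') : Ilv f g (L ++ L') (A ++ A') (S ++ S') := by
  induction h with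
  | nil => simpa
  | consf a _ ih => exact (ih.consf a)
  | consg s _ ih => exact (ih.consg s)

theorem swap {f g : M → ℕ × Dom} {L A S} (h : Ilv f g L A S) : Ilv g f L S A := by
  induction h with
  | nil => exact nil
  | consf a _ ih => exact ih.consg a
  | consg s _ ih => exact ih.consf s

theorem filter {f g : M → ℕ × Dom} (hf : ∀ p, (f p).1 = p.1) (hg : ∀ p, (g p).1 = p.1)
    (P : ℕ → Prop) [DecidablePred P] {L A S} (h : Ilv f g L A S) :
    Ilv f g (L.filter (fun d => decide (P d.1))) (A.filter (fun d => decide (P d.1)))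
      (S.filter (fun d => decide (P d.1))) := by
  induction h with
  | nil => exact nil
  | consf a _ ih =>
    by_cases hP : P a.1
    · rw [List.filter_cons_of_pos (by simp [hf, hP]), List.filter_cons_of_pos (by simp [hP])]
      exact ih.consf a
    · rw [List.filter_cons_of_neg (by simp [hf, hP]), List.filter_cons_of_neg (by simp [hP])]
      exact ih
  | consg s _ ih =>
    by_cases hP : P s.1
    · rw [List.filter_cons_of_pos (by simp [hg, hP]), List.filter_cons_of_pos (by simp [hP])]
      exact ih.consg s
    · rw [List.filter_cons_of_neg (by simp [hg, hP]), List.filter_cons_of_neg (by simp [hP])]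
      exact ih

theorem singletonf {f g : M → ℕ × Dom} (a : M) : Ilv f g [f a] [a] [] := (nil).consf a

end Ilv

/-! ### embeddings into dominoes -/

def hdom (r : ℕ) (z : ℕ × ℕ) : Dom := ((z.1, r + 1 + 2 * z.2), true)
def vdom (r : ℕ) (z : ℕ × ℕ) : Dom := ((r + 1 + 2 * z.2, z.1), false)
def emb (fd : ℕ × ℕ → Dom) (p : M) : ℕ × Dom := (p.1, fd p.2)

theorem inter_empty_of {s t : Finset Cell} (h : ∀ x, x ∈ s → x ∉ t) : s ∩ t = ∅ := by
  rw [Finset.eq_empty_iff_forall_notMem]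
  intro x hx
  exact h x (Finset.mem_inter.1 hx).1 (Finset.mem_inter.1 hx).2

theorem not_mem_of_inter_empty {s t : Finset Cell} (h : s ∩ t = ∅) {x : Cell}
    (hx : x ∈ s) (hx' : x ∈ t) : False := by
  have : x ∈ s ∩ t := Finset.mem_inter.2 ⟨hx, hx'⟩
  rw [h] at this
  exact absurd this (Finset.notMem_empty x)

theorem mem_hdom {r : ℕ} {z : ℕ × ℕ} {x : Cell} :
    x ∈ cellsD (hdom r z) ↔ x.1 = z.1 ∧ (x.2 = r + 1 + 2 * z.2 ∨ x.2 = r + 2 + 2 * z.2) := by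
  obtain ⟨x1, x2⟩ := x
  simp [cellsD, hdom, Prod.ext_iff]
  omega

theorem mem_vdom {r : ℕ} {z : ℕ × ℕ} {x : Cell} :
    x ∈ cellsD (vdom r z) ↔ x.2 = z.1 ∧ (x.1 = r + 1 + 2 * z.2 ∨ x.1 = r + 2 + 2 * z.2) := by
  obtain ⟨x1, x2⟩ := x
  simp [cellsD, vdom, Prod.ext_iff]
  omega

theorem hdom_disj {r : ℕ} {z z' : ℕ × ℕ} (h : z ≠ z') :
    cellsD (hdom r z) ∩ cellsD (hdom r z') = ∅ := by
  refine inter_empty_of fun x hx hx' => ?_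
  rw [mem_hdom] at hx hx'
  exact h (Prod.ext (by omega) (by omega))

theorem vdom_disj {r : ℕ} {z z' : ℕ × ℕ} (h : z ≠ z') :
    cellsD (vdom r z) ∩ cellsD (vdom r z') = ∅ := by
  refine inter_empty_of fun x hx hx' => ?_
  rw [mem_vdom] at hx hx'
  exact h (Prod.ext (by omega) (by omega))

theorem hv_disj {r : ℕ} {z z' : ℕ × ℕ} (h : z'.1 ≤ r) :
    cellsD (hdom r z) ∩ cellsD (vdom r z') = ∅ := by
  refine inter_empty_of fun x hx hx' => ?_
  rw [mem_hdom] at hx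
  rw [mem_vdom] at hx'
  omega

theorem hdom_core {r : ℕ} {z : ℕ × ℕ} : cellsD (hdom r z) ∩ coreCells r = ∅ := by
  refine inter_empty_of fun x hx hx' => ?_
  rw [mem_hdom] at hx
  rw [mem_coreCells] at hx'
  omega

theorem vdom_core {r : ℕ} {z : ℕ × ℕ} : cellsD (vdom r z) ∩ coreCells r = ∅ := by
  refine inter_empty_of fun x hx hx' => ?_
  rw [mem_vdom] at hx
  rw [mem_coreCells] at hx'
  omega

theorem hdom_card {r : ℕ} {z : ℕ × ℕ} : (cellsD (hdom r z)).card = 2 := by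
  rw [show cellsD (hdom r z) = {(z.1, r + 1 + 2 * z.2), (z.1, r + 1 + 2 * z.2 + 1)} from by
    simp [cellsD, hdom]]
  rw [Finset.card_pair (by simp [Prod.ext_iff])]

theorem vdom_card {r : ℕ} {z : ℕ × ℕ} : (cellsD (vdom r z)).card = 2 := by
  rw [show cellsD (vdom r z) = {(r + 1 + 2 * z.2, z.1), (r + 1 + 2 * z.2 + 1, z.1)} from by
    simp [cellsD, vdom]]
  rw [Finset.card_pair (by simp [Prod.ext_iff])]

theorem hdom_shift {r : ℕ} (z : ℕ × ℕ) :
    (if (hdom r z).2 then (((hdom r z).1.1 + 1, (hdom r z).1.2), true)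
      else (((hdom r z).1.1, (hdom r z).1.2 + 1), false)) = hdom r (z.1 + 1, z.2) := rfl

theorem vdom_shift {r : ℕ} (z : ℕ × ℕ) :
    (if (vdom r z).2 then (((vdom r z).1.1 + 1, (vdom r z).1.2), true)
      else (((vdom r z).1.1, (vdom r z).1.2 + 1), false)) = vdom r (z.1 + 1, z.2) := rfl

theorem tabCells_eq {fd gd : ℕ × ℕ → Dom} {B : Tab} {Bh vb : List M}
    (hperm : B.Perm (Bh.map (emb fd) ++ vb.map (emb gd))) :
    ∀ x : Cell, x ∈ tabCells B ↔
      (∃ p ∈ Bh, x ∈ cellsD (fd p.2)) ∨ (∃ s ∈ vb, x ∈ cellsD (gd s.2)) := by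
  intro x
  rw [mem_tabCells]
  constructor
  · rintro ⟨p, hp, hx⟩
    rcases List.mem_append.1 (hperm.subset hp) with h | h
    · obtain ⟨q, hq, rfl⟩ := List.mem_map.1 h
      exact Or.inl ⟨q, hq, hx⟩
    · obtain ⟨q, hq, rfl⟩ := List.mem_map.1 h
      exact Or.inr ⟨q, hq, hx⟩
  · rintro (⟨q, hq, hx⟩ | ⟨q, hq, hx⟩)
    · exact ⟨emb fd q, hperm.symm.subset (List.mem_append.2 (Or.inl (List.mem_map.2 ⟨q, hq, rfl⟩))), hx⟩
    · exact ⟨emb gd q, hperm.symm.subset (List.mem_append.2 (Or.inr (List.mem_map.2 ⟨q, hq, rfl⟩))), hx⟩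

theorem bumpLoop_cons (core : Finset Cell) (B : Tab) (j : ℕ) (d : Dom) (rest : Tab) :
    bumpLoop core B ((j, d) :: rest) =
      if cellsD d ∩ (core ∪ tabCells B) = ∅ then bumpLoop core (B ++ [(j, d)]) rest
      else if (cellsD d ∩ (core ∪ tabCells B)).card = 1 then
        bumpLoop core (B ++ [(j, (if d.1 ∈ (core ∪ tabCells B) then
          (if d.2 then (d.1.1, d.1.2 + 1) else (d.1.1 + 1, d.1.2)) else d.1, !d.2))]) rest
      else bumpLoop core
        (B ++ [(j, (if d.2 then ((d.1.1 + 1, d.1.2), true) else ((d.1.1, d.1.2 + 1), false)))]) rest := rfl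

/-- The main simulation of the bumping loop. -/
theorem bump_sim {fd gd : ℕ × ℕ → Dom} {core : Finset Cell} {h : ℕ}
    (hfd_disj : ∀ z z' : ℕ × ℕ, z ≠ z' → cellsD (fd z) ∩ cellsD (fd z') = ∅)
    (hfd_card : ∀ z, (cellsD (fd z)).card = 2)
    (hfd_shift : ∀ z : ℕ × ℕ, (if (fd z).2 then (((fd z).1.1 + 1, (fd z).1.2), true)
      else (((fd z).1.1, (fd z).1.2 + 1), false)) = fd (z.1 + 1, z.2))
    (PB PC PS : M → Prop)
    (hcoref : ∀ p : M, PB p ∨ PC p → cellsD (fd p.2) ∩ core = ∅)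
    (hcoreg : ∀ p : M, PS p → cellsD (gd p.2) ∩ core = ∅)
    (hfg : ∀ p q : M, PB p ∨ PC p → PS q → cellsD (fd p.2) ∩ cellsD (gd q.2) = ∅)
    (hgd_disj : ∀ z z' : ℕ × ℕ, z ≠ z' → cellsD (gd z) ∩ cellsD (gd z') = ∅)
    (hPBsh : ∀ p : M, PC p → PB (sh h p)) :
    ∀ {CC : Tab} {Crem vrem : List M}, Ilv (emb fd) (emb gd) CC Crem vrem →
    ∀ (B : Tab) (Bh vb : List M), B.Perm (Bh.map (emb fd) ++ vb.map (emb gd)) →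
    (∀ p ∈ Bh, PB p) → (∀ p ∈ Crem, PC p) → (∀ p ∈ vb ++ vrem, PS p) →
    List.Pairwise (fun p q : M => p.2 ≠ q.2) (vb ++ vrem) →
    (∀ C₁ (e : M) C₂, Crem = C₁ ++ e :: C₂ →
      ((∃ q ∈ Bh ++ C₁.map (sh h), q.2 = e.2) ↔ e.2.2 = h)) →
    ∃ CC', bumpLoop core B CC = B ++ CC' ∧
      Ilv (emb fd) (emb gd) CC' (Crem.map (sh h)) vrem ∧
      CC'.map (fun d => d.1) = CC.map (fun d => d.1) := by
  intro CC Crem vrem hIlv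
  induction hIlv with
  | nil =>
    intro B Bh vb _ _ _ _ _ _
    exact ⟨[], by simp [bumpLoop], Ilv.nil, rfl⟩
  | @consf L A S a hIlv ih =>
    intro B Bh vb hperm hPB hPC hPS hpair hKEY
    have hPCa : PC a := hPC a (by simp)
    have htc := tabCells_eq hperm
    have hkey0 := hKEY [] a A (by simp)
    simp only [List.map_nil, List.append_nil] at hkey0
    by_cases hah : a.2.2 = h
    · -- occupied: shift down
      obtain ⟨q, hq, hq2⟩ := hkey0.2 hah
      have hsub : cellsD (fd a.2) ⊆ core ∪ tabCells B := by
        intro x hx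
        refine Finset.mem_union_right _ ((htc x).2 (Or.inl ⟨q, hq, ?_⟩))
        rw [hq2]; exact hx
      have hinter : cellsD (fd a.2) ∩ (core ∪ tabCells B) = cellsD (fd a.2) :=
        Finset.inter_eq_left.2 hsub
      have hne : cellsD (fd a.2) ∩ (core ∪ tabCells B) ≠ ∅ := by
        rw [hinter]
        intro hcon
        have := hfd_card a.2
        rw [hcon] at this
        simp at this
      have hcard : ¬(cellsD (fd a.2) ∩ (core ∪ tabCells B)).card = 1 := by
        rw [hinter, hfd_card]
        omega
      rw [show emb fd a = (a.1, fd a.2) from rfl, bumpLoop_cons, if_neg hne, if_neg hcard,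
        hfd_shift a.2]
      have hsha : sh h a = (a.1, a.2.1 + 1, a.2.2) := sh_eq _ _ hah
      have hembsh : (a.1, fd (a.2.1 + 1, a.2.2)) = emb fd (sh h a) := by
        rw [hsha]; rfl
      rw [hembsh]
      obtain ⟨CC', hbl, hilv, hlab⟩ := ih (B ++ [emb fd (sh h a)]) (Bh ++ [sh h a]) vb
        (by
          refine ((hperm.append_right [emb fd (sh h a)]).trans ?_)
          rw [List.map_append]
          simp only [List.map_cons, List.map_nil]
          rw [List.append_assoc, List.append_assoc]
          exact List.Perm.append_left _ List.perm_append_comm)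
        (by
          intro p hp
          rcases List.mem_append.1 hp with h' | h'
          · exact hPB p h'
          · rw [List.mem_singleton.1 h']
            exact hPBsh a hPCa)
        (fun p hp => hPC p (by simp [hp]))
        hPS hpair
        (by
          intro C₁ e C₂ hsplit
          have := hKEY (a :: C₁) e C₂ (by rw [hsplit, List.cons_append])
          rwa [show Bh ++ (a :: C₁).map (sh h) = (Bh ++ [sh h a]) ++ C₁.map (sh h) from by
            simp] at this)
      refine ⟨emb fd (sh h a) :: CC', ?_, ?_, ?_⟩
      · rw [hbl]
        simp
      · simpa using hilv.consf (sh h a)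
      · simp only [List.map_cons, hlab]
        rw [show (emb fd (sh h a)).1 = (sh h a).1 from rfl, sh_fst]
    · -- not occupied: unchanged
      have hno : ¬∃ q ∈ Bh, q.2 = a.2 := fun hcon => hah (hkey0.1 hcon)
      have hempty : cellsD (fd a.2) ∩ (core ∪ tabCells B) = ∅ := by
        refine inter_empty_of fun x hx hx' => ?_
        rcases Finset.mem_union.1 hx' with h' | h'
        · exact not_mem_of_inter_empty (hcoref a (Or.inr hPCa)) hx h'
        · rcases (htc x).1 h' with ⟨q, hq, hxq⟩ | ⟨q, hq, hxq⟩
          · exact not_mem_of_inter_empty (hfd_disj q.2 a.2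
              (fun hcon => hno ⟨q, hq, hcon⟩)) hxq hx
          · exact not_mem_of_inter_empty (hfg a q (Or.inr hPCa) (hPS q (by simp [hq]))) hx hxq
      rw [show emb fd a = (a.1, fd a.2) from rfl, bumpLoop_cons, if_pos hempty]
      have hsha : sh h a = a := sh_id _ _ hah
      obtain ⟨CC', hbl, hilv, hlab⟩ := ih (B ++ [(a.1, fd a.2)]) (Bh ++ [sh h a]) vb
        (by
          rw [hsha]
          refine ((hperm.append_right [emb fd a]).trans ?_)
          rw [List.map_append]
          simp only [List.map_cons, List.map_nil]
          rw [List.append_assoc, List.append_assoc]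
          exact List.Perm.append_left _ List.perm_append_comm)
        (by
          intro p hp
          rcases List.mem_append.1 hp with h' | h'
          · exact hPB p h'
          · rw [List.mem_singleton.1 h']
            exact hPBsh a hPCa)
        (fun p hp => hPC p (by simp [hp]))
        hPS hpair
        (by
          intro C₁ e C₂ hsplit
          have := hKEY (a :: C₁) e C₂ (by rw [hsplit, List.cons_append])
          rwa [show Bh ++ (a :: C₁).map (sh h) = (Bh ++ [sh h a]) ++ C₁.map (sh h) from by
            simp] at this)
      refine ⟨(a.1, fd a.2) :: CC', ?_, ?_, ?_⟩
      · rw [hbl]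
        simp
      · have : (a.1, fd a.2) = emb fd (sh h a) := by rw [hsha]; rfl
        rw [this]
        simpa using hilv.consf (sh h a)
      · simp only [List.map_cons, hlab]
  | @consg L A S s hIlv ih =>
    intro B Bh vb hperm hPB hPC hPS hpair hKEY
    have htc := tabCells_eq hperm
    have hPSs : PS s := hPS s (by simp)
    have hempty : cellsD (gd s.2) ∩ (core ∪ tabCells B) = ∅ := by
      refine inter_empty_of fun x hx hx' => ?_
      rcases Finset.mem_union.1 hx' with h' | h'
      · exact not_mem_of_inter_empty (hcoreg s hPSs) hx h'
      · rcases (htc x).1 h' with ⟨q, hq, hxq⟩ | ⟨q, hq, hxq⟩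
        · exact not_mem_of_inter_empty (hfg q s (Or.inl (hPB q hq)) hPSs) hxq hx
        · refine not_mem_of_inter_empty (hgd_disj q.2 s.2 ?_) hxq hx
          have := (List.pairwise_append.1 hpair).2.2 q (by simp [hq]) s (by simp)
          exact this
    rw [show emb gd s = (s.1, gd s.2) from rfl, bumpLoop_cons, if_pos hempty]
    obtain ⟨CC', hbl, hilv, hlab⟩ := ih (B ++ [(s.1, gd s.2)]) Bh (vb ++ [s])
      (by
        refine ((hperm.append_right [emb gd s]).trans ?_)
        rw [List.map_append]
        simp only [List.map_cons, List.map_nil]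
        rw [List.append_assoc])
      hPB (fun p hp => hPC p hp)
      (by
        intro p hp
        refine hPS p ?_
        rw [List.append_assoc] at hp
        simpa using hp)
      (by rwa [List.append_assoc] )
      hKEY
    refine ⟨(s.1, gd s.2) :: CC', ?_, ?_, ?_⟩
    · rw [hbl]
      simp
    · exact hilv.consg s
    · simp only [List.map_cons, hlab]

theorem rowEnd_calc {r : ℕ} (hr : 1 ≤ r) {B : Tab} {bh vb : List M} {h : ℕ}
    (hperm : B.Perm (bh.map (emb (hdom r)) ++ vb.map (emb (vdom r))))
    (hb1 : ∀ k, (∃ p ∈ bh, p.2 = (1, k)) ↔ k < h) :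
    rowEnd (coreCells r ∪ tabCells B) 1 = r + 1 + 2 * h := by
  have htc := tabCells_eq hperm
  have hset : (coreCells r ∪ tabCells B).filter (fun c => c.1 = 1)
      = (Finset.Icc 1 (r + 2 * h)).image (fun j => ((1 : ℕ), j)) := by
    ext ⟨x1, x2⟩
    simp only [Finset.mem_filter, Finset.mem_union, Finset.mem_image, Finset.mem_Icc,
      Prod.ext_iff, Prod.mk.injEq]
    constructor
    · rintro ⟨hmem, hx1⟩
      refine ⟨x2, ?_, hx1.symm, rfl⟩
      rcases hmem with hcore | htab
      · rw [mem_coreCells] at hcore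
        simp only at hcore
        omega
      · rcases (htc _).1 htab with ⟨p, hp, hxp⟩ | ⟨q, hq, hxq⟩
        · rw [mem_hdom] at hxp
          simp only at hxp
          have hp1 : p.2.1 = 1 := by omega
          have : p.2.2 < h := (hb1 p.2.2).1 ⟨p, hp, Prod.ext hp1 rfl⟩
          omega
        · rw [mem_vdom] at hxq
          simp only at hxq
          omega
    · rintro ⟨j, ⟨hj1, hj2⟩, h1, h2⟩
      subst h2
      refine ⟨?_, h1.symm⟩
      by_cases hjr : j ≤ r
      · left
        rw [mem_coreCells]
        simp only
        omega
      · right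
        obtain ⟨k, hk, hkj⟩ : ∃ k, k < h ∧ (j = r + 1 + 2 * k ∨ j = r + 2 + 2 * k) := by
          refine ⟨(j - r - 1) / 2, by omega, by omega⟩
        obtain ⟨p, hp, hp2⟩ := (hb1 k).2 hk
        refine (htc _).2 (Or.inl ⟨p, hp, ?_⟩)
        rw [mem_hdom, hp2]
        simp only
        constructor
        · exact h1.symm
        · omega
  rw [rowEnd, hset, Finset.card_image_of_injective _ (fun x y hxy => (Prod.ext_iff.1 hxy).2),
    Nat.card_Icc]
  omega

theorem colEnd_calc {r : ℕ} (hr : 1 ≤ r) {B : Tab} {bh vb : List M} {h : ℕ}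
    (hperm : B.Perm (bh.map (emb (hdom r)) ++ vb.map (emb (vdom r))))
    (hb1 : ∀ k, (∃ p ∈ vb, p.2 = (1, k)) ↔ k < h) :
    colEnd (coreCells r ∪ tabCells B) 1 = r + 1 + 2 * h := by
  have htc := tabCells_eq hperm
  have hset : (coreCells r ∪ tabCells B).filter (fun c => c.2 = 1)
      = (Finset.Icc 1 (r + 2 * h)).image (fun j => (j, (1 : ℕ))) := by
    ext ⟨x1, x2⟩
    simp only [Finset.mem_filter, Finset.mem_union, Finset.mem_image, Finset.mem_Icc,
      Prod.ext_iff, Prod.mk.injEq]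
    constructor
    · rintro ⟨hmem, hx2⟩
      refine ⟨x1, ?_, rfl, hx2.symm⟩
      rcases hmem with hcore | htab
      · rw [mem_coreCells] at hcore
        simp only at hcore
        omega
      · rcases (htc _).1 htab with ⟨p, hp, hxp⟩ | ⟨q, hq, hxq⟩
        · rw [mem_hdom] at hxp
          simp only at hxp
          omega
        · rw [mem_vdom] at hxq
          simp only at hxq
          have hq1 : q.2.1 = 1 := by omega
          have : q.2.2 < h := (hb1 q.2.2).1 ⟨q, hq, Prod.ext hq1 rfl⟩
          omega
    · rintro ⟨j, ⟨hj1, hj2⟩, h1, h2⟩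
      subst h1
      refine ⟨?_, h2.symm⟩
      by_cases hjr : j ≤ r
      · left
        rw [mem_coreCells]
        simp only
        omega
      · right
        obtain ⟨k, hk, hkj⟩ : ∃ k, k < h ∧ (j = r + 1 + 2 * k ∨ j = r + 2 + 2 * k) := by
          refine ⟨(j - r - 1) / 2, by omega, by omega⟩
        obtain ⟨p, hp, hp2⟩ := (hb1 k).2 hk
        refine (htc _).2 (Or.inr ⟨p, hp, ?_⟩)
        rw [mem_vdom, hp2]
        simp only
        constructor
        · exact h2.symm
        · omega
  rw [colEnd, hset, Finset.card_image_of_injective _ (fun x y hxy => (Prod.ext_iff.1 hxy).1),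
    Nat.card_Icc]
  omega

theorem pos_ne_of_sorted {c : List M} (hc : Minv c) :
    List.Pairwise (fun p q : M => p.2 ≠ q.2) c := by
  refine List.Pairwise.imp_of_mem ?_ hc.sorted
  intro p q hp hq hlt hpq
  have := hc.posinj p hp q hq hpq
  subst this
  omega

theorem mB_b1 {c : List M} {i : ℕ} (hc : Minv c) :
    ∀ k, (∃ p ∈ mB i c, p.2 = (1, k)) ↔ k < mh i c := by
  intro k
  rw [← R1 (i := i) hc k]
  constructor
  · rintro ⟨p, hp, hp2⟩
    exact ⟨p, (mem_mB.1 hp).1, (mem_mB.1 hp).2, hp2⟩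
  · rintro ⟨p, hp, hpi, hp2⟩
    exact ⟨p, mem_mB.2 ⟨hp, hpi⟩, hp2⟩

theorem sim_pos {r : ℕ} (hr : 1 ≤ r) {T : Tab} {hc vc : List M} {a : ℤ} (ha : 0 < a)
    (hIlv : Ilv (emb (hdom r)) (emb (vdom r)) T hc vc)
    (hT : T.Pairwise (fun p q => p.1 < q.1))
    (hMc : Minv hc) (hMv : Minv vc)
    (hfreshc : ∀ p ∈ hc, p.1 ≠ a.natAbs) (hfreshv : ∀ p ∈ vc, p.1 ≠ a.natAbs)
    (hvb : ∀ p ∈ vc, p.2.1 ≤ r) :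
    Ilv (emb (hdom r)) (emb (vdom r)) (dInsert r T a) (mIns a.natAbs hc) vc ∧
      (dInsert r T a).Pairwise (fun p q => p.1 < q.1) := by
  set i := a.natAbs with hidef
  set h := mh i hc with hhdef
  have hBIlv : Ilv (emb (hdom r)) (emb (vdom r)) (T.filter (fun p => decide (p.1 < i)))
      (mB i hc) (vc.filter (fun p => decide (p.1 < i))) :=
    hIlv.filter (fun p => rfl) (fun p => rfl) (fun l => l < i)
  have hCIlv : Ilv (emb (hdom r)) (emb (vdom r)) (T.filter (fun p => decide (i < p.1)))
      (mC i hc) (vc.filter (fun p => decide (i < p.1))) :=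
    hIlv.filter (fun p => rfl) (fun p => rfl) (fun l => i < l)
  have hsplitv : vc.filter (fun p => decide (p.1 < i)) ++ vc.filter (fun p => decide (i < p.1))
      = vc := sorted_split (fun p : M => p.1) i vc hMv.sorted hfreshv
  have hrow : rowEnd (coreCells r ∪ tabCells (T.filter (fun p => decide (p.1 < i)))) 1
      = r + 1 + 2 * h := rowEnd_calc hr hBIlv.perm (mB_b1 hMc)
  have hnd : ((1 : ℕ), rowEnd (coreCells r ∪ tabCells (T.filter (fun p => decide (p.1 < i)))) 1)
      = ((1 : ℕ), r + 1 + 2 * h) := by rw [hrow]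
  have hunfold : dInsert r T a = bumpLoop (coreCells r)
      ((T.filter (fun p => decide (p.1 < i))) ++ [(i, hdom r (1, h))])
      (T.filter (fun p => decide (i < p.1))) := by
    rw [dInsert]
    simp only [← hidef]
    rw [if_pos ha, hnd]
    rfl
  have hpairv : List.Pairwise (fun p q : M => p.2 ≠ q.2)
      (vc.filter (fun p => decide (p.1 < i)) ++ vc.filter (fun p => decide (i < p.1))) := by
    rw [hsplitv]
    exact pos_ne_of_sorted hMv
  obtain ⟨CC', hbl, hilvCC, hlab⟩ := bump_sim (core := coreCells r) (h := h)
    (fun z z' hne => hdom_disj hne) (fun z => hdom_card)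
    (fun z => hdom_shift z)
    (fun _ => True) (fun _ => True) (fun p => p.2.1 ≤ r)
    (fun p _ => hdom_core) (fun p hp => vdom_core)
    (fun p q _ hq => hv_disj hq)
    (fun z z' hne => vdom_disj hne)
    (fun p _ => trivial)
    hCIlv
    ((T.filter (fun p => decide (p.1 < i))) ++ [(i, hdom r (1, h))])
    (mB i hc ++ [(i, 1, h)]) (vc.filter (fun p => decide (p.1 < i)))
    (by
      refine ((hBIlv.perm.append_right [(i, hdom r (1, h))]).trans ?_)
      rw [List.map_append]
      simp only [List.map_cons, List.map_nil]
      rw [List.append_assoc, List.append_assoc]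
      refine List.Perm.append_left _ ?_
      rw [show emb (hdom r) (i, 1, h) = (i, hdom r (1, h)) from rfl]
      exact List.perm_append_comm)
    (fun p _ => trivial) (fun p _ => trivial)
    (by
      intro p hp
      rw [hsplitv] at hp
      exact hvb p hp)
    hpairv
    (key hMc hfreshc)
  constructor
  · rw [hunfold, hbl]
    have hIlvmid : Ilv (emb (hdom r)) (emb (vdom r)) [(i, hdom r (1, h))] [(i, 1, h)] [] :=
      Ilv.singletonf (i, 1, h)
    have hfin := (hBIlv.append hIlvmid).append hilvCC
    rw [show (vc.filter (fun p => decide (p.1 < i)) ++ []) ++ vc.filter (fun p => decide (i < p.1))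
        = vc from by rw [List.append_nil]; exact hsplitv] at hfin
    rw [show (mB i hc ++ [(i, 1, h)]) ++ (mC i hc).map (sh h) = mIns i hc from by
      rw [mIns]; simp [hhdef]] at hfin
    exact hfin
  · rw [hunfold, hbl]
    have hTb : (T.filter (fun p => decide (p.1 < i))).Pairwise (fun p q => p.1 < q.1) :=
      hT.sublist (List.filter_sublist (l := T))
    have hTc : (T.filter (fun p => decide (i < p.1))).Pairwise (fun p q => p.1 < q.1) :=
      hT.sublist (List.filter_sublist (l := T))
    have hCC'sorted : CC'.Pairwise (fun p q : ℕ × Dom => p.1 < q.1) := by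
      have h1 : List.Pairwise (· < ·) (CC'.map (fun d => d.1)) := by
        rw [hlab]
        exact (List.pairwise_map).2 (hTc.imp (fun hab => hab))
      exact (List.pairwise_map).1 h1
    have hCC'gt : ∀ d ∈ CC', i < d.1 := by
      intro d hd
      have hmem : d.1 ∈ CC'.map (fun d => d.1) := List.mem_map.2 ⟨d, hd, rfl⟩
      rw [hlab] at hmem
      obtain ⟨q, hq, hq1⟩ := List.mem_map.1 hmem
      have hq2 := (List.mem_filter.1 hq).2
      simp only [decide_eq_true_eq] at hq2
      omega
    rw [List.append_assoc, List.singleton_append]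
    refine List.pairwise_append.2 ⟨hTb, ?_, ?_⟩
    · rw [List.pairwise_cons]
      exact ⟨hCC'gt, hCC'sorted⟩
    · intro x hx y hy
      have hxi : x.1 < i := by
        have := (List.mem_filter.1 hx).2
        simpa using this
      rcases List.mem_cons.1 hy with rfl | hy
      · exact hxi
      · exact hxi.trans (hCC'gt y hy)


theorem sim_neg {r : ℕ} (hr : 1 ≤ r) {T : Tab} {hc vc : List M} {a : ℤ} (ha : a < 0)
    (hIlv : Ilv (emb (hdom r)) (emb (vdom r)) T hc vc)
    (hT : T.Pairwise (fun p q => p.1 < q.1))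
    (hMc : Minv hc) (hMv : Minv vc)
    (hfreshc : ∀ p ∈ hc, p.1 ≠ a.natAbs) (hfreshv : ∀ p ∈ vc, p.1 ≠ a.natAbs)
    (hvb : ∀ p ∈ vc, p.2.1 + 1 ≤ r) :
    Ilv (emb (hdom r)) (emb (vdom r)) (dInsert r T a) hc (mIns a.natAbs vc) ∧
      (dInsert r T a).Pairwise (fun p q => p.1 < q.1) := by
  set i := a.natAbs with hidef
  set h := mh i vc with hhdef
  have hBIlv : Ilv (emb (hdom r)) (emb (vdom r)) (T.filter (fun p => decide (p.1 < i)))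
      (hc.filter (fun p => decide (p.1 < i))) (mB i vc) :=
    hIlv.filter (fun p => rfl) (fun p => rfl) (fun l => l < i)
  have hCIlv : Ilv (emb (hdom r)) (emb (vdom r)) (T.filter (fun p => decide (i < p.1)))
      (hc.filter (fun p => decide (i < p.1))) (mC i vc) :=
    hIlv.filter (fun p => rfl) (fun p => rfl) (fun l => i < l)
  have hsplitc : hc.filter (fun p => decide (p.1 < i)) ++ hc.filter (fun p => decide (i < p.1))
      = hc := sorted_split (fun p : M => p.1) i hc hMc.sorted hfreshc
  have hcol : colEnd (coreCells r ∪ tabCells (T.filter (fun p => decide (p.1 < i)))) 1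
      = r + 1 + 2 * h := colEnd_calc hr hBIlv.perm (mB_b1 hMv)
  have hnd : ((colEnd (coreCells r ∪ tabCells (T.filter (fun p => decide (p.1 < i)))) 1 : ℕ),
      (1 : ℕ)) = ((r + 1 + 2 * h : ℕ), (1 : ℕ)) := by rw [hcol]
  have hunfold : dInsert r T a = bumpLoop (coreCells r)
      ((T.filter (fun p => decide (p.1 < i))) ++ [(i, vdom r (1, h))])
      (T.filter (fun p => decide (i < p.1))) := by
    rw [dInsert]
    simp only [← hidef]
    rw [if_neg (by omega : ¬(0 : ℤ) < a), hnd]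
    rfl
  have hpairc : List.Pairwise (fun p q : M => p.2 ≠ q.2)
      (hc.filter (fun p => decide (p.1 < i)) ++ hc.filter (fun p => decide (i < p.1))) := by
    rw [hsplitc]
    exact pos_ne_of_sorted hMc
  obtain ⟨CC', hbl, hilvCC, hlab⟩ := bump_sim (core := coreCells r) (h := h)
    (fun z z' hne => vdom_disj hne) (fun z => vdom_card)
    (fun z => vdom_shift z)
    (fun p => p.2.1 ≤ r) (fun p => p.2.1 + 1 ≤ r) (fun _ => True)
    (fun p _ => vdom_core) (fun p _ => hdom_core)
    (fun p q hp _ => by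
      rw [Finset.inter_comm]
      refine hv_disj ?_
      rcases hp with hp | hp
      · exact hp
      · omega)
    (fun z z' hne => hdom_disj hne)
    (fun p hp => by
      by_cases hph : p.2.2 = h
      · have : (sh h p).2.1 = p.2.1 + 1 := by rw [sh_eq _ _ hph]
        omega
      · rw [sh_id _ _ hph]
        omega)
    hCIlv.swap
    ((T.filter (fun p => decide (p.1 < i))) ++ [(i, vdom r (1, h))])
    (mB i vc ++ [(i, 1, h)]) (hc.filter (fun p => decide (p.1 < i)))
    (by
      refine ((hBIlv.swap.perm.append_right [(i, vdom r (1, h))]).trans ?_)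
      rw [List.map_append]
      simp only [List.map_cons, List.map_nil]
      rw [List.append_assoc, List.append_assoc]
      refine List.Perm.append_left _ ?_
      rw [show emb (vdom r) (i, 1, h) = (i, vdom r (1, h)) from rfl]
      exact List.perm_append_comm)
    (by
      intro p hp
      rcases List.mem_append.1 hp with h' | h'
      · have := hvb p (mem_mB.1 h').1
        omega
      · rw [List.mem_singleton.1 h']
        exact hr)
    (fun p hp => hvb p (mem_mC.1 hp).1)
    (fun p _ => trivial)
    hpairc
    (key hMv hfreshv)
  constructor
  · rw [hunfold, hbl]
    have hIlvmid : Ilv (emb (vdom r)) (emb (hdom r)) [(i, vdom r (1, h))] [(i, 1, h)] [] :=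
      Ilv.singletonf (i, 1, h)
    have hfin := ((hBIlv.swap.append hIlvmid).append hilvCC).swap
    rw [show (hc.filter (fun p => decide (p.1 < i)) ++ []) ++ hc.filter (fun p => decide (i < p.1))
        = hc from by rw [List.append_nil]; exact hsplitc] at hfin
    rw [show (mB i vc ++ [(i, 1, h)]) ++ (mC i vc).map (sh h) = mIns i vc from by
      rw [mIns]; simp [hhdef]] at hfin
    exact hfin
  · rw [hunfold, hbl]
    have hTb : (T.filter (fun p => decide (p.1 < i))).Pairwise (fun p q => p.1 < q.1) :=
      hT.sublist (List.filter_sublist (l := T))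
    have hTc : (T.filter (fun p => decide (i < p.1))).Pairwise (fun p q => p.1 < q.1) :=
      hT.sublist (List.filter_sublist (l := T))
    have hCC'sorted : CC'.Pairwise (fun p q : ℕ × Dom => p.1 < q.1) := by
      have h1 : List.Pairwise (· < ·) (CC'.map (fun d => d.1)) := by
        rw [hlab]
        exact (List.pairwise_map).2 (hTc.imp (fun hab => hab))
      exact (List.pairwise_map).1 h1
    have hCC'gt : ∀ d ∈ CC', i < d.1 := by
      intro d hd
      have hmem : d.1 ∈ CC'.map (fun d => d.1) := List.mem_map.2 ⟨d, hd, rfl⟩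
      rw [hlab] at hmem
      obtain ⟨q, hq, hq1⟩ := List.mem_map.1 hmem
      have hq2 := (List.mem_filter.1 hq).2
      simp only [decide_eq_true_eq] at hq2
      omega
    rw [List.append_assoc, List.singleton_append]
    refine List.pairwise_append.2 ⟨hTb, ?_, ?_⟩
    · rw [List.pairwise_cons]
      exact ⟨hCC'gt, hCC'sorted⟩
    · intro x hx y hy
      have hxi : x.1 < i := by
        have := (List.mem_filter.1 hx).2
        simpa using this
      rcases List.mem_cons.1 hy with rfl | hy
      · exact hxi
      · exact hxi.trans (hCC'gt y hy)

/-! ### word level -/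

def posL (u : List ℤ) : List ℕ := (u.filter (fun x => decide (0 < x))).map Int.natAbs
def negL (u : List ℤ) : List ℕ := (u.filter (fun x => decide (x < 0))).map Int.natAbs
def Wmod (l : List ℕ) : List M := l.foldl (fun c j => mIns j c) []

theorem Wmod_append (l : List ℕ) (j : ℕ) : Wmod (l ++ [j]) = mIns j (Wmod l) := by
  rw [Wmod, List.foldl_append]
  rfl

theorem posL_sub (u : List ℤ) : (posL u).Sublist (u.map Int.natAbs) :=
  (List.filter_sublist (l := u)).map Int.natAbs
theorem negL_sub (u : List ℤ) : (negL u).Sublist (u.map Int.natAbs) :=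
  (List.filter_sublist (l := u)).map Int.natAbs

theorem posL_append_pos {u : List ℤ} {a : ℤ} (ha : 0 < a) :
    posL (u ++ [a]) = posL u ++ [a.natAbs] := by
  rw [posL, List.filter_append, List.map_append]
  congr 1
  rw [List.filter_cons, if_pos (by simpa using ha)]
  rfl

theorem negL_append_pos {u : List ℤ} {a : ℤ} (ha : 0 < a) : negL (u ++ [a]) = negL u := by
  rw [negL, List.filter_append]
  rw [List.filter_cons, if_neg (by simp; omega)]
  simp [negL]

theorem posL_append_neg {u : List ℤ} {a : ℤ} (ha : a < 0) : posL (u ++ [a]) = posL u := by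
  rw [posL, List.filter_append]
  rw [List.filter_cons, if_neg (by simp; omega)]
  simp [posL]

theorem negL_append_neg {u : List ℤ} {a : ℤ} (ha : a < 0) :
    negL (u ++ [a]) = negL u ++ [a.natAbs] := by
  rw [negL, List.filter_append, List.map_append]
  congr 1
  rw [List.filter_cons, if_pos (by simpa using ha)]
  rfl

theorem Wmod_good : ∀ l : List ℕ, l.Nodup →
    Minv (Wmod l) ∧ (∀ p ∈ Wmod l, p.1 ∈ l) ∧ (∀ p ∈ Wmod l, p.2.1 ≤ l.length) := by
  intro l
  induction l using List.reverseRecOn with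
  | nil => exact fun _ => ⟨Minv.nil, by simp [Wmod], by simp [Wmod]⟩
  | append_singleton l j ih =>
    intro hnd
    have hnd' : l.Nodup := hnd.sublist (by simp)
    have hjl : j ∉ l := fun hc => (List.nodup_append'.1 hnd).2.2 hc (by simp)
    obtain ⟨hM, hlab, hbd⟩ := ih hnd'
    have hfresh : ∀ p ∈ Wmod l, p.1 ≠ j := fun p hp hc => hjl (hc ▸ hlab p hp)
    rw [Wmod_append]
    refine ⟨minv_mIns hM hfresh, ?_, ?_⟩
    · intro p hp
      rcases mIns_label p hp with h | h
      · simp [h]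
      · obtain ⟨q, hq, hq1⟩ := List.mem_map.1 h
        simp [← hq1, hlab q hq]
    · intro p hp
      have := mIns_bound hbd p hp
      simp only [List.length_append, List.length_singleton]
      omega

theorem PD_append (r : ℕ) (u : List ℤ) (a : ℤ) : PD r (u ++ [a]) = dInsert r (PD r u) a := by
  rw [PD, List.foldl_append]
  rfl

theorem PD_spec {r : ℕ} (hr : 1 ≤ r) :
    ∀ u : List ℤ, (∀ x ∈ u, x ≠ 0) → ((u.map Int.natAbs).Nodup) → (negL u).length ≤ r →
    Ilv (emb (hdom r)) (emb (vdom r)) (PD r u) (Wmod (posL u)) (Wmod (negL u)) ∧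
      (PD r u).Pairwise (fun p q => p.1 < q.1) := by
  intro u
  induction u using List.reverseRecOn with
  | nil =>
    intro _ _ _
    exact ⟨Ilv.nil, by simp [PD]⟩
  | append_singleton u a ih =>
    intro h0 hnd hneg
    have hnd2 : ((u.map Int.natAbs) ++ [a.natAbs]).Nodup := by simpa using hnd
    have hndu : (u.map Int.natAbs).Nodup := hnd2.sublist (by simp)
    have hfresh0 : a.natAbs ∉ u.map Int.natAbs := fun hc =>
      (List.nodup_append'.1 hnd2).2.2 hc (by simp)
    have h0u : ∀ x ∈ u, x ≠ 0 := fun x hx => h0 x (by simp [hx])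
    have ha0 : a ≠ 0 := h0 a (by simp)
    have hpnd : (posL u).Nodup := hndu.sublist (posL_sub u)
    have hnnd : (negL u).Nodup := hndu.sublist (negL_sub u)
    obtain ⟨hMp, hlabp, hbdp⟩ := Wmod_good (posL u) hpnd
    obtain ⟨hMn, hlabn, hbdn⟩ := Wmod_good (negL u) hnnd
    have hfreshp : ∀ p ∈ Wmod (posL u), p.1 ≠ a.natAbs := fun p hp hc =>
      hfresh0 ((posL_sub u).subset (hc ▸ hlabp p hp))
    have hfreshn : ∀ p ∈ Wmod (negL u), p.1 ≠ a.natAbs := fun p hp hc =>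
      hfresh0 ((negL_sub u).subset (hc ▸ hlabn p hp))
    rcases ha0.lt_or_gt with ha | ha
    · -- a < 0
      have hneglen : (negL (u ++ [a])).length = (negL u).length + 1 := by
        rw [negL_append_neg ha]
        simp
      obtain ⟨ihIlv, ihS⟩ := ih h0u hndu (by omega)
      rw [PD_append, posL_append_neg ha, negL_append_neg ha, Wmod_append]
      exact sim_neg hr ha ihIlv ihS hMp hMn hfreshp hfreshn
        (fun p hp => by have := hbdn p hp; omega)
    · -- 0 < a
      have hneglen : negL (u ++ [a]) = negL u := negL_append_pos ha
      obtain ⟨ihIlv, ihS⟩ := ih h0u hndu (by rw [hneglen] at hneg; exact hneg)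
      rw [PD_append, posL_append_pos ha, hneglen, Wmod_append]
      exact sim_pos hr ha ihIlv ihS hMp hMn hfreshp hfreshn
        (fun p hp => by
          have := hbdn p hp
          rw [hneglen] at hneg
          omega)

theorem hdom_pos_eq {r : ℕ} {z z' : ℕ × ℕ} {x : Cell} (h1 : x ∈ cellsD (hdom r z))
    (h2 : x ∈ cellsD (hdom r z')) : z = z' := by
  by_contra hne
  exact not_mem_of_inter_empty (hdom_disj hne) h1 h2

theorem vdom_pos_eq {r : ℕ} {z z' : ℕ × ℕ} {x : Cell} (h1 : x ∈ cellsD (vdom r z))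
    (h2 : x ∈ cellsD (vdom r z')) : z = z' := by
  by_contra hne
  exact not_mem_of_inter_empty (vdom_disj hne) h1 h2

theorem newP_bound {i : ℕ} {c : List M} : (newP i c).1 ≤ c.length + 1 := by
  have := List.length_filter_le (fun p : M => decide (p.2.2 = mh i c)) c
  simp only [newP]
  omega

theorem Wmod_length : ∀ l : List ℕ, l.Nodup → (Wmod l).length = l.length := by
  intro l
  induction l using List.reverseRecOn with
  | nil => simp [Wmod]
  | append_singleton l j ih =>
    intro hnd
    have hnd' : l.Nodup := hnd.sublist (by simp)
    have hjl : j ∉ l := fun hc => (List.nodup_append'.1 hnd).2.2 hc (by simp)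
    obtain ⟨hM, hlab, _⟩ := Wmod_good l hnd'
    have hfresh : ∀ p ∈ Wmod l, p.1 ≠ j := fun p hp hc => hjl (hc ▸ hlab p hp)
    have hperm : (mB j (Wmod l) ++ mC j (Wmod l)).Perm (Wmod l) := by
      rw [show mB j (Wmod l) ++ mC j (Wmod l) = Wmod l from
        sorted_split (fun p : M => p.1) j (Wmod l) hM.sorted hfresh]
    rw [Wmod_append]
    have h1 := hperm.length_eq
    simp only [List.length_append] at h1
    have h2 : (mIns j (Wmod l)).length
        = (mB j (Wmod l)).length + ((mC j (Wmod l)).length + 1) := by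
      rw [mIns]
      simp
    have h3 := ih hnd'
    rw [h2]
    simp only [List.length_append, List.length_singleton]
    omega

/-- the insertion step adds exactly the two cells of one new domino -/
theorem step_diff {r : ℕ} (hr : 1 ≤ r) (u : List ℤ) (a : ℤ)
    (h0 : ∀ x ∈ u ++ [a], x ≠ 0) (hnd : ((u ++ [a]).map Int.natAbs).Nodup)
    (hneg : (negL (u ++ [a])).length ≤ r) :
    tabCells (PD r (u ++ [a])) \ tabCells (PD r u) =
      if 0 < a then cellsD (hdom r (newP a.natAbs (Wmod (posL u))))
      else cellsD (vdom r (newP a.natAbs (Wmod (negL u)))) := by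
  have hnd2 : ((u.map Int.natAbs) ++ [a.natAbs]).Nodup := by simpa using hnd
  have hndu : (u.map Int.natAbs).Nodup := hnd2.sublist (by simp)
  have hfresh0 : a.natAbs ∉ u.map Int.natAbs := fun hc =>
    (List.nodup_append'.1 hnd2).2.2 hc (by simp)
  have h0u : ∀ x ∈ u, x ≠ 0 := fun x hx => h0 x (by simp [hx])
  have ha0 : a ≠ 0 := h0 a (by simp)
  have hpnd : (posL u).Nodup := hndu.sublist (posL_sub u)
  have hnnd : (negL u).Nodup := hndu.sublist (negL_sub u)
  obtain ⟨hMp, hlabp, hbdp⟩ := Wmod_good (posL u) hpnd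
  obtain ⟨hMn, hlabn, hbdn⟩ := Wmod_good (negL u) hnnd
  have hfreshp : ∀ p ∈ Wmod (posL u), p.1 ≠ a.natAbs := fun p hp hc =>
    hfresh0 ((posL_sub u).subset (hc ▸ hlabp p hp))
  have hfreshn : ∀ p ∈ Wmod (negL u), p.1 ≠ a.natAbs := fun p hp hc =>
    hfresh0 ((negL_sub u).subset (hc ▸ hlabn p hp))
  have hnegu : (negL u).length ≤ (negL (u ++ [a])).length := by
    rcases ha0.lt_or_gt with ha | ha
    · rw [negL_append_neg ha]; simp
    · rw [negL_append_pos ha]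
  have htc1 := tabCells_eq (PD_spec hr u h0u hndu (by omega)).1.perm
  have htc2 := tabCells_eq (PD_spec hr (u ++ [a]) h0 hnd hneg).1.perm
  rcases ha0.lt_or_gt with ha | ha
  · -- negative letter
    rw [if_neg (by omega)]
    rw [posL_append_neg ha, negL_append_neg ha, Wmod_append] at htc2
    have hgrow := mIns_pos hMn hfreshn
    have hfreshP := newP_fresh (i := a.natAbs) hMn
    have hnewbd : (newP a.natAbs (Wmod (negL u))).1 ≤ r := by
      have h1 := newP_bound (i := a.natAbs) (c := Wmod (negL u))
      have h2 := Wmod_length (negL u) hnnd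
      have h3 : (negL (u ++ [a])).length = (negL u).length + 1 := by
        rw [negL_append_neg ha]; simp
      omega
    ext x
    simp only [Finset.mem_sdiff]
    constructor
    · rintro ⟨hin, hout⟩
      rcases (htc2 x).1 hin with ⟨p, hp, hxp⟩ | ⟨p, hp, hxp⟩
      · exact absurd ((htc1 x).2 (Or.inl ⟨p, hp, hxp⟩)) hout
      · rcases (hgrow p.2).1 ⟨p, hp, rfl⟩ with ⟨q, hq, hq2⟩ | hq2
        · exact absurd ((htc1 x).2 (Or.inr ⟨q, hq, by rw [hq2]; exact hxp⟩)) hout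
        · rwa [hq2] at hxp
    · intro hx
      constructor
      · obtain ⟨p, hp, hp2⟩ := (hgrow (newP a.natAbs (Wmod (negL u)))).2 (Or.inr rfl)
        exact (htc2 x).2 (Or.inr ⟨p, hp, by rw [hp2]; exact hx⟩)
      · intro hold
        rcases (htc1 x).1 hold with ⟨q, hq, hxq⟩ | ⟨q, hq, hxq⟩
        · exact not_mem_of_inter_empty (hv_disj hnewbd) hxq hx
        · exact hfreshP ⟨q, hq, vdom_pos_eq hxq hx⟩
  · -- positive letter
    rw [if_pos ha]
    rw [posL_append_pos ha, negL_append_pos ha, Wmod_append] at htc2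
    have hgrow := mIns_pos hMp hfreshp
    have hfreshP := newP_fresh (i := a.natAbs) hMp
    have hvbd : ∀ q ∈ Wmod (negL u), q.2.1 ≤ r := by
      intro q hq
      have h1 := hbdn q hq
      have h2 : negL (u ++ [a]) = negL u := negL_append_pos ha
      rw [h2] at hneg
      omega
    ext x
    simp only [Finset.mem_sdiff]
    constructor
    · rintro ⟨hin, hout⟩
      rcases (htc2 x).1 hin with ⟨p, hp, hxp⟩ | ⟨p, hp, hxp⟩
      · rcases (hgrow p.2).1 ⟨p, hp, rfl⟩ with ⟨q, hq, hq2⟩ | hq2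
        · exact absurd ((htc1 x).2 (Or.inl ⟨q, hq, by rw [hq2]; exact hxp⟩)) hout
        · rwa [hq2] at hxp
      · exact absurd ((htc1 x).2 (Or.inr ⟨p, hp, hxp⟩)) hout
    · intro hx
      constructor
      · obtain ⟨p, hp, hp2⟩ := (hgrow (newP a.natAbs (Wmod (posL u)))).2 (Or.inr rfl)
        exact (htc2 x).2 (Or.inl ⟨p, hp, by rw [hp2]; exact hx⟩)
      · intro hold
        rcases (htc1 x).1 hold with ⟨q, hq, hxq⟩ | ⟨q, hq, hxq⟩
        · exact hfreshP ⟨q, hq, hdom_pos_eq hxq hx⟩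
        · exact not_mem_of_inter_empty (hv_disj (hvbd q hq)) hx hxq

/-- tableaux with the same two models are equal. -/
theorem PD_unique {r : ℕ} (hr : 1 ≤ r) {u v : List ℤ}
    (h0u : ∀ x ∈ u, x ≠ 0) (hndu : ((u.map Int.natAbs)).Nodup) (hnegu : (negL u).length ≤ r)
    (h0v : ∀ x ∈ v, x ≠ 0) (hndv : ((v.map Int.natAbs)).Nodup) (hnegv : (negL v).length ≤ r)
    (hpos : posL u = posL v) (hneg : negL u = negL v) : PD r u = PD r v := by
  obtain ⟨hIu, hSu⟩ := PD_spec hr u h0u hndu hnegu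
  obtain ⟨hIv, hSv⟩ := PD_spec hr v h0v hndv hnegv
  have hperm : (PD r u).Perm (PD r v) := by
    refine hIu.perm.trans ?_
    rw [hpos, hneg]
    exact hIv.perm.symm
  haveI : IsAntisymm (ℕ × Dom) (fun p q => p.1 < q.1) :=
    ⟨fun a b h1 h2 => absurd (h1.trans h2) (lt_irrefl _)⟩
  exact List.Perm.eq_of_pairwise (fun a b _ _ h1 h2 => absurd (h1.trans h2) (lt_irrefl _)) hSu hSv hperm

theorem main_core {r : ℕ} (hr : 1 ≤ r) (P : List ℤ) (A B : ℤ) (hA : 0 < A) (hB : B < 0)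
    (hnd : ((P ++ [A, B]).map Int.natAbs).Nodup) (h0 : ∀ x ∈ P ++ [A, B], x ≠ 0)
    (hnegP : (negL P).length + 1 ≤ r) :
    PD r (P ++ [B, A]) = PD r (P ++ [A, B]) ∧
    tabCells (PD r (P ++ [B])) \ tabCells (PD r P)
      = tabCells (PD r (P ++ [A, B])) \ tabCells (PD r (P ++ [A])) ∧
    tabCells (PD r (P ++ [B, A])) \ tabCells (PD r (P ++ [B]))
      = tabCells (PD r (P ++ [A])) \ tabCells (PD r P) := by
  have e1 : P ++ [A, B] = (P ++ [A]) ++ [B] := by simp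
  have e2 : P ++ [B, A] = (P ++ [B]) ++ [A] := by simp
  have hpermBA : (P ++ [B, A]).Perm (P ++ [A, B]) :=
    List.Perm.append_left P (List.Perm.swap A B [])
  have hndBA : ((P ++ [B, A]).map Int.natAbs).Nodup :=
    ((hpermBA.map Int.natAbs).nodup_iff).2 hnd
  have h0BA : ∀ x ∈ P ++ [B, A], x ≠ 0 := fun x hx => h0 x (hpermBA.subset hx)
  have hsubA : (P ++ [A]).Sublist (P ++ [A, B]) :=
    List.Sublist.append_left ((List.nil_sublist [B]).cons₂ A) P
  have hsubB : (P ++ [B]).Sublist (P ++ [B, A]) :=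
    List.Sublist.append_left ((List.nil_sublist [A]).cons₂ B) P
  have hsubP : P.Sublist (P ++ [A]) := by simp
  have hndA : ((P ++ [A]).map Int.natAbs).Nodup := hnd.sublist (hsubA.map _)
  have hndB : ((P ++ [B]).map Int.natAbs).Nodup := hndBA.sublist (hsubB.map _)
  have hndP : ((P).map Int.natAbs).Nodup := hndA.sublist ((hsubP).map _)
  have h0A : ∀ x ∈ P ++ [A], x ≠ 0 := fun x hx => h0 x (hsubA.subset hx)
  have h0B : ∀ x ∈ P ++ [B], x ≠ 0 := fun x hx => h0BA x (hsubB.subset hx)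
  have h0P : ∀ x ∈ P, x ≠ 0 := fun x hx => h0A x (hsubP.subset hx)
  have posAB : posL (P ++ [A, B]) = posL P ++ [A.natAbs] := by
    rw [e1, posL_append_neg hB, posL_append_pos hA]
  have negAB : negL (P ++ [A, B]) = negL P ++ [B.natAbs] := by
    rw [e1, negL_append_neg hB, negL_append_pos hA]
  have posBA : posL (P ++ [B, A]) = posL P ++ [A.natAbs] := by
    rw [e2, posL_append_pos hA, posL_append_neg hB]
  have negBA : negL (P ++ [B, A]) = negL P ++ [B.natAbs] := by
    rw [e2, negL_append_pos hA, negL_append_neg hB]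
  have negA : negL (P ++ [A]) = negL P := negL_append_pos hA
  have posB : posL (P ++ [B]) = posL P := posL_append_neg hB
  have negB : negL (P ++ [B]) = negL P ++ [B.natAbs] := negL_append_neg hB
  have hlenAB : (negL (P ++ [A, B])).length ≤ r := by rw [negAB]; simp; omega
  have hlenBA : (negL (P ++ [B, A])).length ≤ r := by rw [negBA]; simp; omega
  have hlenA : (negL (P ++ [A])).length ≤ r := by rw [negA]; omega
  have hlenB : (negL (P ++ [B])).length ≤ r := by rw [negB]; simp; omega
  have hlenP : (negL P).length ≤ r := by omega
  refine ⟨?_, ?_, ?_⟩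
  · exact PD_unique hr h0BA hndBA hlenBA h0 hnd hlenAB (posBA.trans posAB.symm)
      (negBA.trans negAB.symm)
  · have d1 := step_diff hr P B h0B hndB hlenB
    rw [if_neg (by omega)] at d1
    have d2 := step_diff hr (P ++ [A]) B (by rw [← e1]; exact h0) (by rw [← e1]; exact hnd)
      (by rw [← e1]; exact hlenAB)
    rw [if_neg (by omega), ← e1, negA] at d2
    rw [d1, d2]
  · have d3 := step_diff hr (P ++ [B]) A (by rw [← e2]; exact h0BA) (by rw [← e2]; exact hndBA)
      (by rw [← e2]; exact hlenBA)
    rw [if_pos hA, ← e2, posB] at d3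
    have d4 := step_diff hr P A h0A hndA hlenA
    rw [if_pos hA] at d4
    rw [d3, d4]

theorem take_set_le {α : Type*} (l : List α) (idx s : ℕ) (x : α) (h : s ≤ idx) :
    (l.set idx x).take s = l.take s := by
  exact List.take_set_of_le h

theorem PD_append_gen (r : ℕ) (l₁ l₂ : List ℤ) :
    PD r (l₁ ++ l₂) = l₂.foldl (dInsert r) (PD r l₁) := by
  rw [PD, PD, List.foldl_append]

theorem take_split (x : List ℤ) (s m : ℕ) (hs : m ≤ s) :
    x.take s = x.take m ++ (x.drop m).take (s - m) := by
  rw [List.take_drop, show m + (s - m) = s from by omega]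
  rw [show x.take m = (x.take s).take m from by rw [List.take_take, min_eq_left hs]]
  exact (List.take_append_drop m (x.take s)).symm


end D2R

open D2R

/-- If signed permutations `w ∼ v` of `[n]` are related by a `D_2^r` relation
(`v` is obtained from `w` by swapping the adjacent letters `w_j, w_{j+1}` of opposite
signs, where `1 ≤ j ≤ r`), then the recording `r`-domino tableau `Q_D^r(v)` is
obtained from `Q_D^r(w)` by interchanging the labels `j` and `j+1`. -/
theorem D2r_recording_swap (n r : ℕ) (hr : 1 ≤ r) (w v : List ℤ) (hwlen : w.length = n)
    (hperm : List.Perm (w.map Int.natAbs) ((List.range n).map (· + 1)))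
    (j : ℕ) (hj1 : 1 ≤ j) (hjr : j ≤ r) (hjn : j + 1 ≤ n)
    (hsign : w.getD (j - 1) 0 * w.getD j 0 < 0)
    (hv : v = (w.set (j - 1) (w.getD j 0)).set j (w.getD (j - 1) 0)) :
    ∀ k, 1 ≤ k → k ≤ n →
      Qcell r v k = Qcell r w (if k = j then j + 1 else if k = j + 1 then j else k) := by
  subst hwlen
  obtain ⟨m, rfl⟩ : ∃ m, j = m + 1 := ⟨j - 1, by omega⟩
  simp only [Nat.add_sub_cancel] at hsign hv
  have hmlt : m < w.length := by omega
  have hm1lt : m + 1 < w.length := by omega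
  rw [List.getD_eq_getElem w 0 hmlt, List.getD_eq_getElem w 0 hm1lt] at hsign hv
  set A := w[m] with hA
  set B := w[m+1] with hB
  -- global facts about w
  have hwnd : (w.map Int.natAbs).Nodup := by
    refine (hperm.nodup_iff).2 ?_
    exact List.Nodup.map (fun a b hab => by omega) List.nodup_range
  have hw0 : ∀ x ∈ w, x ≠ 0 := by
    intro x hx hx0
    have h1 : x.natAbs ∈ w.map Int.natAbs := List.mem_map.2 ⟨x, hx, rfl⟩
    obtain ⟨y, _, hy⟩ := List.mem_map.1 (hperm.subset h1)
    rw [hx0] at hy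
    simp at hy
  -- prefixes
  set P := w.take m with hP
  have hw1 : w.take (m + 1) = P ++ [A] := by
    rw [← List.take_concat_get (l := w) (i := m) hmlt, List.concat_eq_append]
  have hw2 : w.take (m + 2) = P ++ [A, B] := by
    rw [← List.take_concat_get (l := w) (i := (m + 1)) hm1lt, List.concat_eq_append, hw1]
    simp [hB]
  have hvtake : ∀ s, s ≤ m → v.take s = w.take s := by
    intro s hs
    rw [hv, take_set_le _ _ _ _ (by omega), take_set_le _ _ _ _ (by omega)]
  have hvm0 : v.take m = P := by rw [hvtake m le_rfl]
  have hvlen : v.length = w.length := by rw [hv]; simp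
  have hvgm : ∀ (h : m < v.length), v[m]'h = B := by
    intro h
    simp only [hv]
    rw [List.getElem_set_ne (by omega), List.getElem_set_self]
  have hvgm1 : ∀ (h : m + 1 < v.length), v[m+1]'h = A := by
    intro h
    simp only [hv]
    rw [List.getElem_set_self]
  have hv1 : v.take (m + 1) = P ++ [B] := by
    rw [← List.take_concat_get (l := v) (i := m) (by omega), List.concat_eq_append, hvm0, hvgm]
  have hv2 : v.take (m + 2) = P ++ [B, A] := by
    rw [← List.take_concat_get (l := v) (i := (m + 1)) (by omega), List.concat_eq_append, hv1, hvgm1]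
    simp
  -- hypotheses for main_core
  have hndAB : ((P ++ [A, B]).map Int.natAbs).Nodup := by
    rw [← hw2]
    exact hwnd.sublist ((List.take_sublist (m + 2) w).map _)
  have h0AB : ∀ x ∈ P ++ [A, B], x ≠ 0 := by
    intro x hx
    rw [← hw2] at hx
    exact hw0 x ((List.take_sublist (m + 2) w).subset hx)
  have hnegP1 : (negL P).length + 1 ≤ r := by
    have h1 : (negL P).length ≤ P.length := by
      rw [negL, List.length_map]
      exact List.length_filter_le _ _
    have h2 : P.length = m := by
      rw [hP, List.length_take]
      omega
    omega
  have hpermBA : (P ++ [B, A]).Perm (P ++ [A, B]) :=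
    List.Perm.append_left P (List.Perm.swap A B [])
  have HC : PD r (P ++ [B, A]) = PD r (P ++ [A, B]) ∧
      tabCells (PD r (P ++ [B])) \ tabCells (PD r P)
        = tabCells (PD r (P ++ [A, B])) \ tabCells (PD r (P ++ [A])) ∧
      tabCells (PD r (P ++ [B, A])) \ tabCells (PD r (P ++ [B]))
        = tabCells (PD r (P ++ [A])) \ tabCells (PD r P) := by
    rcases mul_neg_iff.1 hsign with ⟨hA1, hB1⟩ | ⟨hA1, hB1⟩
    · exact main_core hr P A B hA1 hB1 hndAB h0AB hnegP1
    · obtain ⟨c1, c2, c3⟩ := main_core hr P B A hB1 hA1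
        (((hpermBA.map Int.natAbs).nodup_iff).2 hndAB)
        (fun x hx => h0AB x (hpermBA.subset hx)) hnegP1
      exact ⟨c1.symm, c3.symm, c2.symm⟩
  obtain ⟨HCeq, HCii, HCiii⟩ := HC
  intro k hk1 hkn
  rcases Nat.lt_trichotomy k (m + 1) with hklt | hkeq | hkgt
  · rw [if_neg (by omega), if_neg (by omega), Qcell, Qcell,
      hvtake k (by omega), hvtake (k - 1) (by omega)]
  · subst hkeq
    rw [if_pos rfl, Qcell, Qcell, show m + 1 + 1 = m + 2 from rfl,
      show m + 1 - 1 = m from rfl, show m + 2 - 1 = m + 1 from rfl,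
      hv1, hvm0, hw2, hw1]
    exact HCii
  · rcases Nat.lt_trichotomy k (m + 2) with h2 | hkeq2 | hkgt2
    · omega
    · subst hkeq2
      rw [if_neg (by omega), if_pos (by omega), Qcell, Qcell,
        show m + 2 - 1 = m + 1 from rfl, show m + 1 - 1 = m from rfl,
        hv2, hv1, hw1, ← hP]
      exact HCiii
    · rw [if_neg (by omega), if_neg (by omega)]
      have hS : ∀ s, m + 2 ≤ s → tabCells (PD r (v.take s)) = tabCells (PD r (w.take s)) := by
        intro s hs
        have hdropeq : v.drop (m + 2) = w.drop (m + 2) := by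
          rw [hv, List.drop_set, if_pos (by omega), List.drop_set, if_pos (by omega)]
        have hPD2 : PD r (v.take (m + 2)) = PD r (w.take (m + 2)) := by
          rw [hv2, hw2, HCeq]
        rw [take_split v s (m + 2) hs, take_split w s (m + 2) hs, hdropeq,
          PD_append_gen, PD_append_gen, hPD2]
      rw [Qcell, Qcell, hS k (by omega), hS (k - 1) (by omega)]
end

section
/- Let w ∈ W^BC_n with |w_1| > |w_2| and n ≥ 2. Under domino insertion with core δ_0 (empty core), the insertion tableaux of w_1 w_2 and of (−w_1) w_2 after two steps are equal; moreover if w_1 > 0 the recording tableau of w after two steps is the vertical 2×2 tableau with horizontal dominoes labeled 1 (top) and 2 (bottom), while the recording tableau of (−w_1) w_2 after two steps is the 2×2 tableau with vertical dominoes labeled 1 (left) and 2 (right). -/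
lemma PD_one (x : ℤ) (hx : x ≠ 0) :
    PD 0 [x] = [(x.natAbs, ((1,1), decide (0 < x)))] := by
  rcases hx.lt_or_gt with h | h
  · simp [PD, dInsert, bumpLoop, coreCells, tabCells, colEnd, rowEnd, h, not_lt.mpr h.le, h.not_gt]
  · simp [PD, dInsert, bumpLoop, coreCells, tabCells, colEnd, rowEnd, h]

lemma PD_two (x y : ℤ) (hx : x ≠ 0) (hy : y ≠ 0) (h : |y| < |x|) :
    PD 0 [x, y] = if 0 < y then [(y.natAbs,((1,1),true)),(x.natAbs,((2,1),true))]
      else [(y.natAbs,((1,1),false)),(x.natAbs,((1,2),false))] := by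
  have hba : y.natAbs < x.natAbs := by
    rw [Int.abs_eq_natAbs, Int.abs_eq_natAbs] at h; exact_mod_cast h
  have h2 : PD 0 [x, y] = dInsert 0 (PD 0 [x]) y := by simp [PD]
  rw [h2, PD_one x hx]
  rcases hx.lt_or_gt with h1 | h1 <;>
  rcases lt_trichotomy y 0 with h3 | h3 | h3
  all_goals first
    | (exact absurd h3 hy)
    | (simp [dInsert, bumpLoop, tabCells, cellsD, coreCells, rowEnd, colEnd,
        hba, hba.not_gt, h1, h3, h1.not_gt, h3.not_gt, not_lt.mpr h1.le, not_lt.mpr h3.le] <;> decide)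



/-- Let `|w₁| > |w₂| ≥ 1`.  Under domino insertion with empty core (`r = 0`), the
insertion tableaux of `w₁ w₂` and of `(-w₁) w₂` after two steps coincide; moreover
if `w₁ > 0` the recording tableau of `w₁ w₂` consists of the horizontal dominoes
`{(1,1),(1,2)}` labelled `1` and `{(2,1),(2,2)}` labelled `2`, while the recording
tableau of `(-w₁) w₂` consists of the vertical dominoes `{(1,1),(2,1)}` labelled `1`
and `{(1,2),(2,2)}` labelled `2`. -/
theorem D30_two_step_insertion (w1 w2 : ℤ) (h0 : w2 ≠ 0) (h12 : |w2| < |w1|) :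
    (∀ i : ℕ, pcells (PD 0 [w1, w2]) i = pcells (PD 0 [-w1, w2]) i) ∧
    (0 < w1 →
      Qcell 0 [w1, w2] 1 = ({(1, 1), (1, 2)} : Finset Cell) ∧
      Qcell 0 [w1, w2] 2 = ({(2, 1), (2, 2)} : Finset Cell) ∧
      Qcell 0 [-w1, w2] 1 = ({(1, 1), (2, 1)} : Finset Cell) ∧
      Qcell 0 [-w1, w2] 2 = ({(1, 2), (2, 2)} : Finset Cell)) := by
  have hx : w1 ≠ 0 := by
    rintro rfl; simp at h12; exact absurd (abs_nonneg w2) (not_le.mpr h12)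
  have hx' : (-w1) ≠ 0 := neg_ne_zero.mpr hx
  have h12' : |w2| < |(-w1)| := by rwa [abs_neg]
  have e2 := PD_two w1 w2 hx h0 h12
  have e2' := PD_two (-w1) w2 hx' h0 h12'
  rw [Int.natAbs_neg] at e2'
  constructor
  · intro i; rw [e2, e2']
  · intro h1
    have e1 : PD 0 [w1] = [(w1.natAbs, ((1,1), true))] := by
      simpa [h1] using PD_one w1 hx
    have e1' : PD 0 [-w1] = [(w1.natAbs, ((1,1), false))] := by
      simpa [not_lt.mpr h1.le, Int.natAbs_neg] using PD_one (-w1) hx'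
    have t0 : [w1, w2].take 0 = ([] : List ℤ) := rfl
    have t1 : [w1, w2].take 1 = [w1] := rfl
    have t2 : [w1, w2].take 2 = [w1, w2] := rfl
    have t0' : [-w1, w2].take 0 = ([] : List ℤ) := rfl
    have t1' : [-w1, w2].take 1 = [-w1] := rfl
    have t2' : [-w1, w2].take 2 = [-w1, w2] := rfl
    have hP0 : PD 0 ([] : List ℤ) = [] := rfl
    refine ⟨?_, ?_, ?_, ?_⟩
    · rw [Qcell, t1, t0, e1, hP0]; simp [tabCells, cellsD]
    · rw [Qcell, t2, t1, e2, e1]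
      rcases lt_or_gt_of_ne h0 with h3 | h3 <;>
        simp [not_lt.mpr h3.le, h3, tabCells, cellsD] <;> decide
    · rw [Qcell, t1', t0', e1', hP0]; simp [tabCells, cellsD]
    · rw [Qcell, t2', t1', e2', e1']
      rcases lt_or_gt_of_ne h0 with h3 | h3 <;>
        simp [not_lt.mpr h3.le, h3, tabCells, cellsD] <;> decide
end

section
/- If y, z ∈ I_n are involutions in S_n with y ≈_i z (meaning there exists w ∈ S_n with y ~K_i~ w ~dK_i~ z) and A := {i-1, i, i+1}, then z = y if y(A) ≠ A and y(i) is between y(i-1) and y(i+1); z = (i-1,i) y (i-1,i) if y(A) ≠ A and y(i+1) is between y(i-1) and y(i); z = (i,i+1) y (i,i+1) if y(A) ≠ A and y(i-1) is between y(i) and y(i+1); and z = (i-1,i+1) y (i-1,i+1) if y(A) = A. -/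
/-- `BtwVal a b c` : the value `b` lies strictly between `a` and `c`. -/
def BtwVal (a b c : ℕ) : Prop := (a < b ∧ b < c) ∨ (c < b ∧ b < a)

/-- `KmoveAt i v w` : `w` is obtained from `v` by a Knuth move on the positions
`i-1, i, i+1` of the one-line notation, or `w = v` when the subword
`v_{i-1} v_i v_{i+1}` is in monotonic order. -/
def KmoveAt (i : ℕ) (v w : Equiv.Perm ℕ) : Prop :=
  (BtwVal (v (i - 1)) (v i) (v (i + 1)) ∧ w = v) ∨
  (BtwVal (v (i - 1)) (v (i + 1)) (v i) ∧ w = v * Equiv.swap (i - 1) i) ∨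
  (BtwVal (v i) (v (i - 1)) (v (i + 1)) ∧ w = v * Equiv.swap i (i + 1))


private lemma swap_cases (u v x : ℕ) :
    (x = u ∧ Equiv.swap u v x = v) ∨ (x = v ∧ Equiv.swap u v x = u) ∨
    (x ≠ u ∧ x ≠ v ∧ Equiv.swap u v x = x) := by
  rcases eq_or_ne x u with h | h
  · exact Or.inl ⟨h, by rw [h, Equiv.swap_apply_left]⟩
  rcases eq_or_ne x v with h2 | h2
  · exact Or.inr (Or.inl ⟨h2, by rw [h2, Equiv.swap_apply_right]⟩)
  · exact Or.inr (Or.inr ⟨h, h2, Equiv.swap_apply_of_ne_of_ne h h2⟩)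

private lemma conj_fix (a c : ℕ) (y : Equiv.Perm ℕ) (ha : y a = a) (hc : y c = c) :
    Equiv.swap a c * y * Equiv.swap a c = y := by
  ext x
  simp only [Equiv.Perm.mul_apply]
  rcases eq_or_ne x a with rfl | hxa
  · rw [Equiv.swap_apply_left, hc, Equiv.swap_apply_right, ha]
  rcases eq_or_ne x c with rfl | hxc
  · rw [Equiv.swap_apply_right, ha, Equiv.swap_apply_left, hc]
  · have h1 : y x ≠ a := fun h => hxa (y.injective (h.trans ha.symm))
    have h2 : y x ≠ c := fun h => hxc (y.injective (h.trans hc.symm))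
    rw [Equiv.swap_apply_of_ne_of_ne hxa hxc, Equiv.swap_apply_of_ne_of_ne h1 h2]

private lemma conj_swapac (a c : ℕ) (y : Equiv.Perm ℕ) (ha : y a = c) (hc : y c = a) :
    Equiv.swap a c * y * Equiv.swap a c = y := by
  ext x
  simp only [Equiv.Perm.mul_apply]
  rcases eq_or_ne x a with rfl | hxa
  · rw [Equiv.swap_apply_left, hc, Equiv.swap_apply_left, ha]
  rcases eq_or_ne x c with rfl | hxc
  · rw [Equiv.swap_apply_right, ha, Equiv.swap_apply_right, hc]
  · have h1 : y x ≠ a := fun h => hxc (y.injective (h.trans hc.symm))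
    have h2 : y x ≠ c := fun h => hxa (y.injective (h.trans ha.symm))
    rw [Equiv.swap_apply_of_ne_of_ne hxa hxc, Equiv.swap_apply_of_ne_of_ne h1 h2]

private lemma conjE2 (a b c : ℕ) (hab : a ≠ b) (hac : a ≠ c) (hbc : b ≠ c)
    (y : Equiv.Perm ℕ) (ha : y a = b) (hb : y b = a) (hc : y c = c) :
    Equiv.swap a b * y * Equiv.swap b c = Equiv.swap a c * y * Equiv.swap a c := by
  ext x
  simp only [Equiv.Perm.mul_apply]
  rcases eq_or_ne x a with rfl | hxa
  · rw [Equiv.swap_apply_of_ne_of_ne hab hac, ha, Equiv.swap_apply_right,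
      Equiv.swap_apply_left, hc, Equiv.swap_apply_right]
  rcases eq_or_ne x b with rfl | hxb
  · rw [Equiv.swap_apply_left, hc, Equiv.swap_apply_of_ne_of_ne (Ne.symm hac) (Ne.symm hbc),
      Equiv.swap_apply_of_ne_of_ne (Ne.symm hab) hbc, hb, Equiv.swap_apply_left]
  rcases eq_or_ne x c with rfl | hxc
  · rw [Equiv.swap_apply_right, hb, Equiv.swap_apply_left, Equiv.swap_apply_right, ha,
      Equiv.swap_apply_of_ne_of_ne (Ne.symm hab) hbc]
  · have h1 : y x ≠ a := fun h => hxb (y.injective (h.trans hb.symm))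
    have h2 : y x ≠ b := fun h => hxa (y.injective (h.trans ha.symm))
    have h3 : y x ≠ c := fun h => hxc (y.injective (h.trans hc.symm))
    rw [Equiv.swap_apply_of_ne_of_ne hxb hxc, Equiv.swap_apply_of_ne_of_ne hxa hxc,
      Equiv.swap_apply_of_ne_of_ne h1 h2, Equiv.swap_apply_of_ne_of_ne h1 h3]

private lemma conjE3 (a b c : ℕ) (hab : a ≠ b) (hac : a ≠ c) (hbc : b ≠ c)
    (y : Equiv.Perm ℕ) (ha : y a = a) (hb : y b = c) (hc : y c = b) :
    Equiv.swap b c * y * Equiv.swap a b = Equiv.swap a c * y * Equiv.swap a c := by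
  ext x
  simp only [Equiv.Perm.mul_apply]
  rcases eq_or_ne x a with rfl | hxa
  · rw [Equiv.swap_apply_left, hb, Equiv.swap_apply_right, Equiv.swap_apply_left, hc,
      Equiv.swap_apply_of_ne_of_ne (Ne.symm hab) hbc]
  rcases eq_or_ne x b with rfl | hxb
  · rw [Equiv.swap_apply_right, ha, Equiv.swap_apply_of_ne_of_ne hab hac,
      Equiv.swap_apply_of_ne_of_ne (Ne.symm hab) hbc, hb, Equiv.swap_apply_right]
  rcases eq_or_ne x c with rfl | hxc
  · rw [Equiv.swap_apply_of_ne_of_ne (Ne.symm hac) (Ne.symm hbc), hc, Equiv.swap_apply_left,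
      Equiv.swap_apply_right, ha, Equiv.swap_apply_left]
  · have h1 : y x ≠ a := fun h => hxa (y.injective (h.trans ha.symm))
    have h2 : y x ≠ b := fun h => hxc (y.injective (h.trans hc.symm))
    have h3 : y x ≠ c := fun h => hxb (y.injective (h.trans hb.symm))
    rw [Equiv.swap_apply_of_ne_of_ne hxa hxb, Equiv.swap_apply_of_ne_of_ne hxa hxc,
      Equiv.swap_apply_of_ne_of_ne h2 h3, Equiv.swap_apply_of_ne_of_ne h1 h3]

private lemma image_eq (a b c : ℕ) (hab : a ≠ b) (hac : a ≠ c) (hbc : b ≠ c)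
    (y : Equiv.Perm ℕ)
    (hp : y a = a ∨ y a = b ∨ y a = c) (hq : y b = a ∨ y b = b ∨ y b = c)
    (hr : y c = a ∨ y c = b ∨ y c = c) :
    (⇑y) '' ({a, b, c} : Set ℕ) = ({a, b, c} : Set ℕ) := by
  have d1 : y a ≠ y b := fun h => hab (y.injective h)
  have d2 : y a ≠ y c := fun h => hac (y.injective h)
  have d3 : y b ≠ y c := fun h => hbc (y.injective h)
  have him : (⇑y) '' ({a, b, c} : Set ℕ) = {y a, y b, y c} := by
    simp [Set.image_insert_eq]
  rw [him]
  ext x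
  simp only [Set.mem_insert_iff, Set.mem_singleton_iff]
  omega

/-- If `y, z ∈ I_n` are involutions in `S_n` with `y ≈_i z` (there is `w ∈ S_n`
with `y ~K_i~ w ~dK_i~ z`) and `A = {i-1, i, i+1}`, then: `z = y` if `y(A) ≠ A` and
`y(i)` is between `y(i-1)` and `y(i+1)`; `z = (i-1,i)·y·(i-1,i)` if `y(A) ≠ A` and
`y(i+1)` is between `y(i-1)` and `y(i)`; `z = (i,i+1)·y·(i,i+1)` if `y(A) ≠ A` and
`y(i-1)` is between `y(i)` and `y(i+1)`; and `z = (i-1,i+1)·y·(i-1,i+1)` if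
`y(A) = A`. -/
theorem knuth_dualKnuth_involution (n i : ℕ) (hi1 : 1 < i) (hi2 : i < n)
    (y z : Equiv.Perm ℕ) (hy : y * y = 1) (hz : z * z = 1)
    (hyn : ∀ j, (j = 0 ∨ n < j) → y j = j) (hzn : ∀ j, (j = 0 ∨ n < j) → z j = j)
    (h : ∃ w : Equiv.Perm ℕ, KmoveAt i y w ∧ KmoveAt i w⁻¹ z⁻¹) :
    ((⇑y) '' ({i - 1, i, i + 1} : Set ℕ) ≠ ({i - 1, i, i + 1} : Set ℕ) ∧
        BtwVal (y (i - 1)) (y i) (y (i + 1)) → z = y) ∧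
    ((⇑y) '' ({i - 1, i, i + 1} : Set ℕ) ≠ ({i - 1, i, i + 1} : Set ℕ) ∧
        BtwVal (y (i - 1)) (y (i + 1)) (y i) →
          z = Equiv.swap (i - 1) i * y * Equiv.swap (i - 1) i) ∧
    ((⇑y) '' ({i - 1, i, i + 1} : Set ℕ) ≠ ({i - 1, i, i + 1} : Set ℕ) ∧
        BtwVal (y i) (y (i - 1)) (y (i + 1)) →
          z = Equiv.swap i (i + 1) * y * Equiv.swap i (i + 1)) ∧
    ((⇑y) '' ({i - 1, i, i + 1} : Set ℕ) = ({i - 1, i, i + 1} : Set ℕ) →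
          z = Equiv.swap (i - 1) (i + 1) * y * Equiv.swap (i - 1) (i + 1)) := by
  obtain ⟨w, h1, h2⟩ := h
  have hyinv : y⁻¹ = y := inv_eq_of_mul_eq_one_right hy
  have hzinv : z⁻¹ = z := inv_eq_of_mul_eq_one_right hz
  have hyy : ∀ x, y (y x) = x := fun x => by
    rw [← Equiv.Perm.mul_apply, hy, Equiv.Perm.one_apply]
  have d1 : y (i - 1) ≠ y i := fun hh => absurd (y.injective hh) (by omega)
  have d2 : y (i - 1) ≠ y (i + 1) := fun hh => absurd (y.injective hh) (by omega)
  have d3 : y i ≠ y (i + 1) := fun hh => absurd (y.injective hh) (by omega)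
  simp only [KmoveAt] at h1 h2
  have key : (BtwVal (y (i-1)) (y i) (y (i+1)) ∧ z = y) ∨
      (BtwVal (y (i-1)) (y (i+1)) (y i) ∧
        ((BtwVal (Equiv.swap (i-1) i (y (i-1))) (Equiv.swap (i-1) i (y (i+1)))
            (Equiv.swap (i-1) i (y i)) ∧
          z = Equiv.swap (i-1) i * y * Equiv.swap (i-1) i) ∨
         (((y (i-1) = i-1 ∨ y (i-1) = i ∨ y (i-1) = i+1) ∧
           (y i = i-1 ∨ y i = i ∨ y i = i+1) ∧
           (y (i+1) = i-1 ∨ y (i+1) = i ∨ y (i+1) = i+1)) ∧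
          z = Equiv.swap i (i+1) * y * Equiv.swap (i-1) i))) ∨
      (BtwVal (y i) (y (i-1)) (y (i+1)) ∧
        ((BtwVal (Equiv.swap i (i+1) (y i)) (Equiv.swap i (i+1) (y (i-1)))
            (Equiv.swap i (i+1) (y (i+1))) ∧
          z = Equiv.swap i (i+1) * y * Equiv.swap i (i+1)) ∨
         (((y (i-1) = i-1 ∨ y (i-1) = i ∨ y (i-1) = i+1) ∧
           (y i = i-1 ∨ y i = i ∨ y i = i+1) ∧
           (y (i+1) = i-1 ∨ y (i+1) = i ∨ y (i+1) = i+1)) ∧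
          z = Equiv.swap (i-1) i * y * Equiv.swap i (i+1)))) := by
    rcases h1 with ⟨hb, hw⟩ | ⟨hb, hw⟩ | ⟨hb, hw⟩
    · -- w = y
      rw [hw, hyinv] at h2
      rcases h2 with ⟨_, hz1⟩ | ⟨hb2, _⟩ | ⟨hb2, _⟩
      · exact Or.inl ⟨hb, hzinv.symm.trans hz1⟩
      · exfalso; unfold BtwVal at hb hb2; omega
      · exfalso; unfold BtwVal at hb hb2; omega
    · -- w = y * swap (i-1) i
      have hwinv : w⁻¹ = Equiv.swap (i-1) i * y := by
        rw [hw, mul_inv_rev, Equiv.swap_inv, hyinv]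
      rw [hwinv] at h2
      simp only [Equiv.Perm.mul_apply] at h2
      rcases h2 with ⟨_, hz1⟩ | ⟨hb2, hz1⟩ | ⟨_, hz1⟩
      · -- z⁻¹ = s*y : contradiction
        exfalso
        have h3 : z = Equiv.swap (i-1) i * y := hzinv.symm.trans hz1
        have h4 := congrArg Inv.inv h3
        rw [hz1, mul_inv_rev, Equiv.swap_inv, hyinv] at h4
        have e := Equiv.ext_iff.mp h4 (i-1)
        simp only [Equiv.Perm.mul_apply] at e
        rw [Equiv.swap_apply_left] at e
        have c1 := swap_cases (i-1) i (y (i-1))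
        unfold BtwVal at hb
        omega
      · exact Or.inr (Or.inl ⟨hb, Or.inl ⟨hb2, hzinv.symm.trans hz1⟩⟩)
      · -- z⁻¹ = s*y*t
        have h3 : z = Equiv.swap (i-1) i * y * Equiv.swap i (i+1) := hzinv.symm.trans hz1
        have h4 := congrArg Inv.inv h3
        rw [hz1, mul_inv_rev, mul_inv_rev, Equiv.swap_inv, Equiv.swap_inv, hyinv,
          ← mul_assoc] at h4
        have e1 := Equiv.ext_iff.mp h4 (i-1)
        have e2 := Equiv.ext_iff.mp h4 i
        have e3 := Equiv.ext_iff.mp h4 (i+1)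
        simp only [Equiv.Perm.mul_apply] at e1 e2 e3
        rw [Equiv.swap_apply_of_ne_of_ne (show i-1 ≠ i by omega) (show i-1 ≠ i+1 by omega),
          Equiv.swap_apply_left] at e1
        rw [Equiv.swap_apply_left, Equiv.swap_apply_right] at e2
        rw [Equiv.swap_apply_right,
          Equiv.swap_apply_of_ne_of_ne (show i+1 ≠ i-1 by omega) (show i+1 ≠ i by omega)] at e3
        have c1 := swap_cases (i-1) i (y (i-1))
        have c2 := swap_cases (i-1) i (y i)
        have c3 := swap_cases (i-1) i (y (i+1))
        have c4 := swap_cases i (i+1) (y (i-1))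
        have c5 := swap_cases i (i+1) (y i)
        have c6 := swap_cases i (i+1) (y (i+1))
        refine Or.inr (Or.inl ⟨hb, Or.inr ⟨⟨?_, ?_, ?_⟩, h3.trans h4⟩⟩) <;> omega
    · -- w = y * swap i (i+1)
      have hwinv : w⁻¹ = Equiv.swap i (i+1) * y := by
        rw [hw, mul_inv_rev, Equiv.swap_inv, hyinv]
      rw [hwinv] at h2
      simp only [Equiv.Perm.mul_apply] at h2
      rcases h2 with ⟨_, hz1⟩ | ⟨_, hz1⟩ | ⟨hb2, hz1⟩
      · -- z⁻¹ = t*y : contradiction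
        exfalso
        have h3 : z = Equiv.swap i (i+1) * y := hzinv.symm.trans hz1
        have h4 := congrArg Inv.inv h3
        rw [hz1, mul_inv_rev, Equiv.swap_inv, hyinv] at h4
        have e := Equiv.ext_iff.mp h4 i
        simp only [Equiv.Perm.mul_apply] at e
        rw [Equiv.swap_apply_left] at e
        have c1 := swap_cases i (i+1) (y i)
        unfold BtwVal at hb
        omega
      · -- z⁻¹ = t*y*s
        have h3 : z = Equiv.swap i (i+1) * y * Equiv.swap (i-1) i := hzinv.symm.trans hz1
        have h4 := congrArg Inv.inv h3
        rw [hz1, mul_inv_rev, mul_inv_rev, Equiv.swap_inv, Equiv.swap_inv, hyinv,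
          ← mul_assoc] at h4
        have e1 := Equiv.ext_iff.mp h4 (i-1)
        have e2 := Equiv.ext_iff.mp h4 i
        have e3 := Equiv.ext_iff.mp h4 (i+1)
        simp only [Equiv.Perm.mul_apply] at e1 e2 e3
        rw [Equiv.swap_apply_left,
          Equiv.swap_apply_of_ne_of_ne (show i-1 ≠ i by omega) (show i-1 ≠ i+1 by omega)] at e1
        rw [Equiv.swap_apply_right, Equiv.swap_apply_left] at e2
        rw [Equiv.swap_apply_right,
          Equiv.swap_apply_of_ne_of_ne (show i+1 ≠ i-1 by omega) (show i+1 ≠ i by omega)] at e3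
        have c1 := swap_cases (i-1) i (y (i-1))
        have c2 := swap_cases (i-1) i (y i)
        have c3 := swap_cases (i-1) i (y (i+1))
        have c4 := swap_cases i (i+1) (y (i-1))
        have c5 := swap_cases i (i+1) (y i)
        have c6 := swap_cases i (i+1) (y (i+1))
        refine Or.inr (Or.inr ⟨hb, Or.inr ⟨⟨?_, ?_, ?_⟩, h3.trans h4⟩⟩) <;> omega
      · exact Or.inr (Or.inr ⟨hb, Or.inl ⟨hb2, hzinv.symm.trans hz1⟩⟩)
  refine ⟨?_, ?_, ?_, ?_⟩
  · rintro ⟨-, hbtw⟩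
    rcases key with ⟨_, hzz⟩ | ⟨hb, _⟩ | ⟨hb, _⟩
    · exact hzz
    · exfalso; unfold BtwVal at hbtw hb; omega
    · exfalso; unfold BtwVal at hbtw hb; omega
  · rintro ⟨hne, hbtw⟩
    rcases key with ⟨hb, _⟩ | ⟨_, ⟨_, hzz⟩ | ⟨mems, _⟩⟩ | ⟨hb, _⟩
    · exfalso; unfold BtwVal at hbtw hb; omega
    · exact hzz
    · exact absurd (image_eq (i-1) i (i+1) (by omega) (by omega) (by omega) y
        mems.1 mems.2.1 mems.2.2) hne
    · exfalso; unfold BtwVal at hbtw hb; omega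
  · rintro ⟨hne, hbtw⟩
    rcases key with ⟨hb, _⟩ | ⟨hb, _⟩ | ⟨_, ⟨_, hzz⟩ | ⟨mems, _⟩⟩
    · exfalso; unfold BtwVal at hbtw hb; omega
    · exfalso; unfold BtwVal at hbtw hb; omega
    · exact hzz
    · exact absurd (image_eq (i-1) i (i+1) (by omega) (by omega) (by omega) y
        mems.1 mems.2.1 mems.2.2) hne
  · intro hA
    have hp : y (i-1) = i-1 ∨ y (i-1) = i ∨ y (i-1) = i+1 := by
      have hm : y (i-1) ∈ (⇑y) '' ({i-1, i, i+1} : Set ℕ) := ⟨i-1, by simp, rfl⟩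
      rw [hA] at hm
      simpa using hm
    have hq : y i = i-1 ∨ y i = i ∨ y i = i+1 := by
      have hm : y i ∈ (⇑y) '' ({i-1, i, i+1} : Set ℕ) := ⟨i, by simp, rfl⟩
      rw [hA] at hm
      simpa using hm
    have hr : y (i+1) = i-1 ∨ y (i+1) = i ∨ y (i+1) = i+1 := by
      have hm : y (i+1) ∈ (⇑y) '' ({i-1, i, i+1} : Set ℕ) := ⟨i+1, by simp, rfl⟩
      rw [hA] at hm
      simpa using hm
    have hvals : (y (i-1) = i-1 ∧ y i = i ∧ y (i+1) = i+1) ∨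
        (y (i-1) = i ∧ y i = i-1 ∧ y (i+1) = i+1) ∨
        (y (i-1) = i-1 ∧ y i = i+1 ∧ y (i+1) = i) ∨
        (y (i-1) = i+1 ∧ y i = i ∧ y (i+1) = i-1) := by
      rcases hp with e | e | e
      · rcases hq with f | f | f
        · exact absurd (e.trans f.symm) d1
        · refine Or.inl ⟨e, f, ?_⟩
          rcases hr with g | g | g
          · exact absurd (e.trans g.symm) d2
          · exact absurd (f.trans g.symm) d3
          · exact g
        · refine Or.inr (Or.inr (Or.inl ⟨e, f, ?_⟩))
          have hh := hyy i; rw [f] at hh; exact hh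
      · have f : y i = i - 1 := by have hh := hyy (i-1); rw [e] at hh; exact hh
        refine Or.inr (Or.inl ⟨e, f, ?_⟩)
        rcases hr with g | g | g
        · exact absurd (f.trans g.symm) d3
        · exact absurd (e.trans g.symm) d2
        · exact g
      · have g : y (i+1) = i - 1 := by have hh := hyy (i-1); rw [e] at hh; exact hh
        refine Or.inr (Or.inr (Or.inr ⟨e, ?_, g⟩))
        rcases hq with f | f | f
        · exact absurd (f.trans g.symm) d3
        · exact f
        · exact absurd (e.trans f.symm) d1
    rcases hvals with ⟨e1, e2, e3⟩ | ⟨e1, e2, e3⟩ | ⟨e1, e2, e3⟩ | ⟨e1, e2, e3⟩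
    · -- identity on A
      rcases key with ⟨_, hzz⟩ | ⟨hb, _⟩ | ⟨hb, _⟩
      · rw [hzz]; exact (conj_fix (i-1) (i+1) y e1 e3).symm
      · exfalso; unfold BtwVal at hb; omega
      · exfalso; unfold BtwVal at hb; omega
    · -- y swaps i-1, i
      rcases key with ⟨hb, _⟩ | ⟨hb, _⟩ | ⟨_, ⟨hb2, _⟩ | ⟨_, hzz⟩⟩
      · exfalso; unfold BtwVal at hb; omega
      · exfalso; unfold BtwVal at hb; omega
      · exfalso
        have c4 := swap_cases i (i+1) (y (i-1))
        have c5 := swap_cases i (i+1) (y i)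
        have c6 := swap_cases i (i+1) (y (i+1))
        unfold BtwVal at hb2
        omega
      · rw [hzz]
        exact conjE2 (i-1) i (i+1) (by omega) (by omega) (by omega) y e1 e2 e3
    · -- y swaps i, i+1
      rcases key with ⟨hb, _⟩ | ⟨_, ⟨hb2, _⟩ | ⟨_, hzz⟩⟩ | ⟨hb, _⟩
      · exfalso; unfold BtwVal at hb; omega
      · exfalso
        have c1 := swap_cases (i-1) i (y (i-1))
        have c2 := swap_cases (i-1) i (y i)
        have c3 := swap_cases (i-1) i (y (i+1))
        unfold BtwVal at hb2
        omega
      · rw [hzz]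
        exact conjE3 (i-1) i (i+1) (by omega) (by omega) (by omega) y e1 e2 e3
      · exfalso; unfold BtwVal at hb; omega
    · -- y swaps i-1, i+1
      rcases key with ⟨_, hzz⟩ | ⟨hb, _⟩ | ⟨hb, _⟩
      · rw [hzz]; exact (conj_swapac (i-1) (i+1) y e1 e3).symm
      · exfalso; unfold BtwVal at hb; omega
      · exfalso; unfold BtwVal at hb; omega
end

section
/- Let y ∈ I_n be an involution and 1 < i < n, with A = {i-1, i, i+1}. Define z by the case rule: z = y if y(A) ≠ A and y(i) lies between y(i-1) and y(i+1); z = (i-1,i)·y·(i-1,i) if y(A) ≠ A and y(i+1) lies between y(i-1) and y(i); z = (i,i+1)·y·(i,i+1) if y(A) ≠ A and y(i-1) lies between y(i) and y(i+1); z = (i-1,i+1)·y·(i-1,i+1) if y(A) = A. Then z is again an involution in S_n, and the map y ↦ z is an involution on I_n. -/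
open scoped Classical

lemma btw_swap (u a b c : ℕ)
    (h : ¬((u = a ∨ u = b ∨ u = c) ∧ (u + 1 = a ∨ u + 1 = b ∨ u + 1 = c))) :
    (BtwVal (Equiv.swap u (u+1) a) (Equiv.swap u (u+1) b) (Equiv.swap u (u+1) c)
      ↔ BtwVal a b c) := by
  simp only [BtwVal, Equiv.swap_apply_def]
  split_ifs <;> omega

lemma conj_sq (s y : Equiv.Perm ℕ) (hs : ∀ x, s (s x) = x) (hyy : ∀ x, y (y x) = x) :
    (s*y*s)*(s*y*s) = 1 := by
  ext x
  simp [Equiv.Perm.mul_apply, hs, hyy]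

lemma conj_conj (s y : Equiv.Perm ℕ) (hs : ∀ x, s (s x) = x) :
    s*(s*y*s)*s = y := by
  ext x
  simp [Equiv.Perm.mul_apply, hs]

lemma image_triple (e : Equiv.Perm ℕ) (x1 x2 x3 : ℕ) :
    ⇑e '' {x1, x2, x3} = {e x1, e x2, e x3} := by
  simp [Set.image_insert_eq]

lemma conj_image (s y : Equiv.Perm ℕ) (A : Set ℕ) (hs : ⇑s '' A = A) :
    ⇑(s*y*s) '' A = ⇑s '' (⇑y '' A) := by
  rw [Equiv.Perm.coe_mul, Equiv.Perm.coe_mul, Set.image_comp, Set.image_comp, hs]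

lemma image_image_swap (s : Equiv.Perm ℕ) (hs : ∀ x, s (s x) = x) (X : Set ℕ) :
    ⇑s '' (⇑s '' X) = X := by
  rw [← Set.image_comp]
  have : ⇑s ∘ ⇑s = id := funext hs
  rw [this, Set.image_id]


/-- The dual-equivalence case rule on involutions: `z = (i-1,i+1)·y·(i-1,i+1)` if
`y(A) = A` where `A = {i-1,i,i+1}`; otherwise `z = y` if `y(i)` lies between
`y(i-1)` and `y(i+1)`, `z = (i-1,i)·y·(i-1,i)` if `y(i+1)` lies between `y(i-1)`
and `y(i)`, and `z = (i,i+1)·y·(i,i+1)` if `y(i-1)` lies between `y(i)` and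
`y(i+1)`. -/
noncomputable def dualMove (i : ℕ) (y : Equiv.Perm ℕ) : Equiv.Perm ℕ :=
  if (⇑y) '' ({i - 1, i, i + 1} : Set ℕ) = ({i - 1, i, i + 1} : Set ℕ) then
    Equiv.swap (i - 1) (i + 1) * y * Equiv.swap (i - 1) (i + 1)
  else if BtwVal (y (i - 1)) (y i) (y (i + 1)) then y
  else if BtwVal (y (i - 1)) (y (i + 1)) (y i) then
    Equiv.swap (i - 1) i * y * Equiv.swap (i - 1) i
  else Equiv.swap i (i + 1) * y * Equiv.swap i (i + 1)

set_option maxHeartbeats 2000000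

/-- For an involution `y ∈ I_n` and `1 < i < n`, the element `z` produced by the
dual-equivalence case rule is again an involution, and the map `y ↦ z` is an
involution on `I_n`. -/
theorem dualMove_involution (n i : ℕ) (hi1 : 1 < i) (hi2 : i < n)
    (y : Equiv.Perm ℕ) (hy : y * y = 1) (hyn : ∀ j, (j = 0 ∨ n < j) → y j = j) :
    dualMove i y * dualMove i y = 1 ∧ dualMove i (dualMove i y) = y := by
  clear hyn hi2
  obtain ⟨u, rfl⟩ : ∃ u, i = u + 1 := ⟨i - 1, by omega⟩
  have hyy : ∀ x, y (y x) = x := by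
    intro x
    have h : (y * y) x = (1 : Equiv.Perm ℕ) x := by rw [hy]
    simpa [Equiv.Perm.mul_apply] using h
  have hs0A : ⇑(Equiv.swap u (u+1+1)) '' ({u, u+1, u+1+1} : Set ℕ) = {u, u+1, u+1+1} := by
    rw [image_triple, Equiv.swap_apply_left, Equiv.swap_apply_right,
      Equiv.swap_apply_of_ne_of_ne (by omega) (by omega)]
    ext x; simp only [Set.mem_insert_iff, Set.mem_singleton_iff]; omega
  have hs1A : ⇑(Equiv.swap u (u+1)) '' ({u, u+1, u+1+1} : Set ℕ) = {u, u+1, u+1+1} := by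
    rw [image_triple, Equiv.swap_apply_left, Equiv.swap_apply_right,
      Equiv.swap_apply_of_ne_of_ne (by omega) (by omega)]
    ext x; simp only [Set.mem_insert_iff, Set.mem_singleton_iff]; omega
  have hs2A : ⇑(Equiv.swap (u+1) (u+1+1)) '' ({u, u+1, u+1+1} : Set ℕ) = {u, u+1, u+1+1} := by
    rw [image_triple, Equiv.swap_apply_of_ne_of_ne (by omega) (by omega),
      Equiv.swap_apply_left, Equiv.swap_apply_right]
    ext x; simp only [Set.mem_insert_iff, Set.mem_singleton_iff]; omega
  have hs0self : ∀ x, Equiv.swap u (u+1+1) (Equiv.swap u (u+1+1) x) = x :=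
    fun x => Equiv.swap_apply_self _ _ _
  have hs1self : ∀ x, Equiv.swap u (u+1) (Equiv.swap u (u+1) x) = x :=
    fun x => Equiv.swap_apply_self _ _ _
  have hs2self : ∀ x, Equiv.swap (u+1) (u+1+1) (Equiv.swap (u+1) (u+1+1) x) = x :=
    fun x => Equiv.swap_apply_self _ _ _
  -- distinctness of values
  have hne1 : y u ≠ y (u+1) := fun hq => by have := y.injective hq; omega
  have hne2 : y u ≠ y (u+1+1) := fun hq => by have := y.injective hq; omega
  have hne3 : y (u+1) ≠ y (u+1+1) := fun hq => by have := y.injective hq; omega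
  by_cases hS : ⇑y '' ({u, u+1, u+1+1} : Set ℕ) = ({u, u+1, u+1+1} : Set ℕ)
  · -- case y(A) = A
    set s0 := Equiv.swap u (u+1+1) with hs0def
    have hz : dualMove (u+1) y = s0 * y * s0 := by
      simp only [dualMove, Nat.add_sub_cancel]
      rw [if_pos hS]
    have hSz : ⇑(s0 * y * s0) '' ({u, u+1, u+1+1} : Set ℕ) = {u, u+1, u+1+1} := by
      rw [conj_image _ _ _ hs0A, hS, hs0A]
    have hz2 : dualMove (u+1) (s0 * y * s0) = s0 * (s0 * y * s0) * s0 := by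
      simp only [dualMove, Nat.add_sub_cancel]
      rw [if_pos hSz]
    rw [hz, hz2]
    exact ⟨conj_sq _ _ hs0self hyy, conj_conj _ _ hs0self⟩
  · by_cases hB1 : BtwVal (y u) (y (u+1)) (y (u+1+1))
    · -- case z = y
      have hz : dualMove (u+1) y = y := by
        simp only [dualMove, Nat.add_sub_cancel]
        rw [if_neg hS, if_pos hB1]
      rw [hz, hz]
      exact ⟨hy, rfl⟩
    · by_cases hB2 : BtwVal (y u) (y (u+1+1)) (y (u+1))
      · -- case z = s1 y s1
        set s1 := Equiv.swap u (u+1) with hs1def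
        have hz : dualMove (u+1) y = s1 * y * s1 := by
          simp only [dualMove, Nat.add_sub_cancel]
          rw [if_neg hS, if_neg hB1, if_pos hB2]
        have hB2' : (y u < y (u+1+1) ∧ y (u+1+1) < y (u+1)) ∨
            (y (u+1) < y (u+1+1) ∧ y (u+1+1) < y u) := hB2
        have key1 : ¬((u = y u ∨ u = y (u+1) ∨ u = y (u+1+1)) ∧
            (u+1 = y u ∨ u+1 = y (u+1) ∨ u+1 = y (u+1+1))) := by
          rintro ⟨h1, h2⟩
          have ha : y u = u ∨ y u = u+1 ∨ y u = u+1+1 := by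
            rcases h1 with h|h|h
            · exact Or.inl h.symm
            · right; left; have h' := congrArg y h; rwa [hyy] at h'
            · right; right; have h' := congrArg y h; rwa [hyy] at h'
          have hb : y (u+1) = u ∨ y (u+1) = u+1 ∨ y (u+1) = u+1+1 := by
            rcases h2 with h|h|h
            · left; have h' := congrArg y h; rwa [hyy] at h'
            · exact Or.inr (Or.inl h.symm)
            · right; right; have h' := congrArg y h; rwa [hyy] at h'
          apply hS
          rw [image_triple]
          ext x; simp only [Set.mem_insert_iff, Set.mem_singleton_iff]; omega
        -- values of z
        have hv1 : (s1 * y * s1) u = s1 (y (u+1)) := by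
          rw [Equiv.Perm.mul_apply, Equiv.Perm.mul_apply, hs1def, Equiv.swap_apply_left]
        have hv2 : (s1 * y * s1) (u+1) = s1 (y u) := by
          rw [Equiv.Perm.mul_apply, Equiv.Perm.mul_apply, hs1def, Equiv.swap_apply_right]
        have hv3 : (s1 * y * s1) (u+1+1) = s1 (y (u+1+1)) := by
          rw [Equiv.Perm.mul_apply, Equiv.Perm.mul_apply, hs1def,
            Equiv.swap_apply_of_ne_of_ne (show u+1+1 ≠ u by omega) (show u+1+1 ≠ u+1 by omega)]
        have hSz : ¬(⇑(s1 * y * s1) '' ({u, u+1, u+1+1} : Set ℕ) = {u, u+1, u+1+1}) := by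
          rw [conj_image _ _ _ hs1A]
          intro h
          apply hS
          rw [← image_image_swap s1 hs1self (⇑y '' {u, u+1, u+1+1}), h, hs1A]
        have hBz1 : ¬ BtwVal (s1 (y (u+1))) (s1 (y u)) (s1 (y (u+1+1))) := by
          rw [hs1def, btw_swap u _ _ _ (by omega)]
          exact fun hh => by
            have hh' : (y (u+1) < y u ∧ y u < y (u+1+1)) ∨
                (y (u+1+1) < y u ∧ y u < y (u+1)) := hh
            omega
        have hBz2 : BtwVal (s1 (y (u+1))) (s1 (y (u+1+1))) (s1 (y u)) := by
          rw [hs1def, btw_swap u _ _ _ (by omega)]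
          exact show (y (u+1) < y (u+1+1) ∧ y (u+1+1) < y u) ∨
            (y u < y (u+1+1) ∧ y (u+1+1) < y (u+1)) by omega
        have hz2 : dualMove (u+1) (s1 * y * s1) = s1 * (s1 * y * s1) * s1 := by
          simp only [dualMove, Nat.add_sub_cancel]
          rw [if_neg hSz]
          simp only [hv1, hv2, hv3]
          rw [if_neg hBz1, if_pos hBz2]
        rw [hz, hz2]
        exact ⟨conj_sq _ _ hs1self hyy, conj_conj _ _ hs1self⟩
      · -- else case z = s2 y s2
        set s2 := Equiv.swap (u+1) (u+1+1) with hs2def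
        have hz : dualMove (u+1) y = s2 * y * s2 := by
          simp only [dualMove, Nat.add_sub_cancel]
          rw [if_neg hS, if_neg hB1, if_neg hB2]
        have hB1' : ¬((y u < y (u+1) ∧ y (u+1) < y (u+1+1)) ∨
            (y (u+1+1) < y (u+1) ∧ y (u+1) < y u)) := hB1
        have hB2' : ¬((y u < y (u+1+1) ∧ y (u+1+1) < y (u+1)) ∨
            (y (u+1) < y (u+1+1) ∧ y (u+1+1) < y u)) := hB2
        have key2 : ¬((u+1 = y u ∨ u+1 = y (u+1) ∨ u+1 = y (u+1+1)) ∧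
            (u+1+1 = y u ∨ u+1+1 = y (u+1) ∨ u+1+1 = y (u+1+1))) := by
          rintro ⟨h1, h2⟩
          have hb : y (u+1) = u ∨ y (u+1) = u+1 ∨ y (u+1) = u+1+1 := by
            rcases h1 with h|h|h
            · left; have h' := congrArg y h; rwa [hyy] at h'
            · exact Or.inr (Or.inl h.symm)
            · right; right; have h' := congrArg y h; rwa [hyy] at h'
          have hc : y (u+1+1) = u ∨ y (u+1+1) = u+1 ∨ y (u+1+1) = u+1+1 := by
            rcases h2 with h|h|h
            · left; have h' := congrArg y h; rwa [hyy] at h'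
            · right; left; have h' := congrArg y h; rwa [hyy] at h'
            · exact Or.inr (Or.inr h.symm)
          apply hS
          rw [image_triple]
          ext x; simp only [Set.mem_insert_iff, Set.mem_singleton_iff]; omega
        have hv1 : (s2 * y * s2) u = s2 (y u) := by
          rw [Equiv.Perm.mul_apply, Equiv.Perm.mul_apply, hs2def,
            Equiv.swap_apply_of_ne_of_ne (show u ≠ u+1 by omega) (show u ≠ u+1+1 by omega)]
        have hv2 : (s2 * y * s2) (u+1) = s2 (y (u+1+1)) := by
          rw [Equiv.Perm.mul_apply, Equiv.Perm.mul_apply, hs2def, Equiv.swap_apply_left]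
        have hv3 : (s2 * y * s2) (u+1+1) = s2 (y (u+1)) := by
          rw [Equiv.Perm.mul_apply, Equiv.Perm.mul_apply, hs2def, Equiv.swap_apply_right]
        have hSz : ¬(⇑(s2 * y * s2) '' ({u, u+1, u+1+1} : Set ℕ) = {u, u+1, u+1+1}) := by
          rw [conj_image _ _ _ hs2A]
          intro h
          apply hS
          rw [← image_image_swap s2 hs2self (⇑y '' {u, u+1, u+1+1}), h, hs2A]
        have hBz1 : ¬ BtwVal (s2 (y u)) (s2 (y (u+1+1))) (s2 (y (u+1))) := by
          rw [hs2def, btw_swap (u+1) _ _ _ (by omega)]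
          exact fun hh => hB2 hh
        have hBz2 : ¬ BtwVal (s2 (y u)) (s2 (y (u+1))) (s2 (y (u+1+1))) := by
          rw [hs2def, btw_swap (u+1) _ _ _ (by omega)]
          exact fun hh => hB1 hh
        have hz2 : dualMove (u+1) (s2 * y * s2) = s2 * (s2 * y * s2) * s2 := by
          simp only [dualMove, Nat.add_sub_cancel]
          rw [if_neg hSz]
          simp only [hv1, hv2, hv3]
          rw [if_neg hBz1, if_neg hBz2]
        rw [hz, hz2]
        exact ⟨conj_sq _ _ hs2self hyy, conj_conj _ _ hs2self⟩
end

section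
/- For a fixed-point-free signed involution v ∈ G^{BC,m}_n and i ∈ [n-1], exactly one of the following four conditions holds: (weak descent) v(i) = i+1 or v(i) = -i-1; (weak ascent) n < v(i) < v(i+1) or v(i) < v(i+1) < -n; (strict descent) i+1 ≠ v(i) > v(i+1) ≠ i; (strict ascent) otherwise. In particular the four sets Des^=, Asc^=, Des^<, Asc^< restricted to {s_1,...,s_{n-1}} partition that set. -/
/-- The type `B` Coxeter group `W^BC_n` of signed permutations, realized as the
subgroup of `Equiv.Perm ℤ` of permutations `w` with `w(-i) = -w(i)` which fix
every integer `i` with `i = 0` or `|i| > n`. -/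
def WBC (n : ℕ) : Subgroup (Equiv.Perm ℤ) where
  carrier := {w | (∀ i : ℤ, w (-i) = - w i) ∧ (∀ i : ℤ, (i = 0 ∨ (n : ℤ) < |i|) → w i = i)}
  one_mem' := by refine ⟨fun i => ?_, fun i _ => ?_⟩ <;> simp
  mul_mem' := by
    rintro a b ⟨ha1, ha2⟩ ⟨hb1, hb2⟩
    refine ⟨fun i => ?_, fun i hi => ?_⟩
    · simp [Equiv.Perm.mul_apply, hb1, ha1]
    · simp [Equiv.Perm.mul_apply, hb2 i hi, ha2 i hi]
  inv_mem' := by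
    rintro a ⟨ha1, ha2⟩
    refine ⟨fun i => ?_, fun i hi => ?_⟩
    · apply a.injective
      simp [ha1, Equiv.Perm.inv_def]
    · apply a.injective
      rw [Equiv.Perm.inv_def, Equiv.apply_symm_apply, ha2 i hi]

/-- For a fixed-point-free signed involution `v ∈ G^{BC,m}_n` (so `v ∈ I^FPF_{2n}`
with `v(i+1) ≥ min{i, v(i)}` for all `i > n`) and `i ∈ [n-1]`, exactly one of the
following holds: (weak descent) `v(i) = i+1` or `v(i) = -(i+1)`; (weak ascent)
`n < v(i) < v(i+1)` or `v(i) < v(i+1) < -n`; (strict descent)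
`i+1 ≠ v(i) > v(i+1) ≠ i`; (strict ascent) otherwise. -/
theorem descent_ascent_partition (n : ℕ) (v : Equiv.Perm ℤ) (hv : v ∈ WBC (2 * n))
    (hinv : v * v = 1) (hfpf : ∀ i : ℤ, 1 ≤ i → i ≤ (2 * n : ℕ) → |v i| ≠ i)
    (hG : ∀ i : ℤ, (n : ℤ) < i → i < (2 * n : ℕ) → min i (v i) ≤ v (i + 1))
    (i : ℕ) (hi1 : 1 ≤ i) (hi2 : i + 1 ≤ n) :
    ((v (i : ℤ) = (i : ℤ) + 1 ∨ v (i : ℤ) = -((i : ℤ) + 1)) ∧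
      ¬(((n : ℤ) < v (i : ℤ) ∧ v (i : ℤ) < v ((i : ℤ) + 1)) ∨
          (v (i : ℤ) < v ((i : ℤ) + 1) ∧ v ((i : ℤ) + 1) < -(n : ℤ))) ∧
      ¬(v (i : ℤ) ≠ (i : ℤ) + 1 ∧ v ((i : ℤ) + 1) < v (i : ℤ) ∧ v ((i : ℤ) + 1) ≠ (i : ℤ))) ∨
    ((((n : ℤ) < v (i : ℤ) ∧ v (i : ℤ) < v ((i : ℤ) + 1)) ∨
        (v (i : ℤ) < v ((i : ℤ) + 1) ∧ v ((i : ℤ) + 1) < -(n : ℤ))) ∧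
      ¬(v (i : ℤ) = (i : ℤ) + 1 ∨ v (i : ℤ) = -((i : ℤ) + 1)) ∧
      ¬(v (i : ℤ) ≠ (i : ℤ) + 1 ∧ v ((i : ℤ) + 1) < v (i : ℤ) ∧ v ((i : ℤ) + 1) ≠ (i : ℤ))) ∨
    ((v (i : ℤ) ≠ (i : ℤ) + 1 ∧ v ((i : ℤ) + 1) < v (i : ℤ) ∧ v ((i : ℤ) + 1) ≠ (i : ℤ)) ∧
      ¬(v (i : ℤ) = (i : ℤ) + 1 ∨ v (i : ℤ) = -((i : ℤ) + 1)) ∧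
      ¬(((n : ℤ) < v (i : ℤ) ∧ v (i : ℤ) < v ((i : ℤ) + 1)) ∨
          (v (i : ℤ) < v ((i : ℤ) + 1) ∧ v ((i : ℤ) + 1) < -(n : ℤ)))) ∨
    (¬(v (i : ℤ) = (i : ℤ) + 1 ∨ v (i : ℤ) = -((i : ℤ) + 1)) ∧
      ¬(((n : ℤ) < v (i : ℤ) ∧ v (i : ℤ) < v ((i : ℤ) + 1)) ∨
          (v (i : ℤ) < v ((i : ℤ) + 1) ∧ v ((i : ℤ) + 1) < -(n : ℤ))) ∧
      ¬(v (i : ℤ) ≠ (i : ℤ) + 1 ∧ v ((i : ℤ) + 1) < v (i : ℤ) ∧ v ((i : ℤ) + 1) ≠ (i : ℤ))) := by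
  obtain ⟨hodd, -⟩ := hv
  have hvv : ∀ x : ℤ, v (v x) = x := by
    intro x
    have := congrArg (fun w : Equiv.Perm ℤ => w x) hinv
    simpa [Equiv.Perm.mul_apply] using this
  set a := v (i : ℤ) with ha
  set b := v ((i : ℤ) + 1) with hb
  have hi1' : (1 : ℤ) ≤ (i : ℤ) := by exact_mod_cast hi1
  have hn : (i : ℤ) + 1 ≤ (n : ℤ) := by exact_mod_cast hi2
  -- P and Q exclusive
  have hPQ : (a = (i : ℤ) + 1 ∨ a = -((i : ℤ) + 1)) →
      ¬(((n : ℤ) < a ∧ a < b) ∨ (a < b ∧ b < -(n : ℤ))) := by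
    rintro (h1 | h1) (⟨h2, h3⟩ | ⟨h2, h3⟩) <;> omega
  -- P and R exclusive (uses involution/oddness)
  have hPR : (a = (i : ℤ) + 1 ∨ a = -((i : ℤ) + 1)) →
      ¬(a ≠ (i : ℤ) + 1 ∧ b < a ∧ b ≠ (i : ℤ)) := by
    rintro (h1 | h1) ⟨h2, h3, h4⟩
    · exact h2 h1
    · have h5 : v a = (i : ℤ) := by rw [ha, hvv]
      rw [h1, hodd, ← hb] at h5
      omega
  -- Q and R exclusive
  have hQR : (((n : ℤ) < a ∧ a < b) ∨ (a < b ∧ b < -(n : ℤ))) →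
      ¬(a ≠ (i : ℤ) + 1 ∧ b < a ∧ b ≠ (i : ℤ)) := by
    rintro (⟨h2, h3⟩ | ⟨h2, h3⟩) ⟨h4, h5, h6⟩ <;> omega
  by_cases hP : a = (i : ℤ) + 1 ∨ a = -((i : ℤ) + 1)
  · exact Or.inl ⟨hP, hPQ hP, hPR hP⟩
  by_cases hQ : ((n : ℤ) < a ∧ a < b) ∨ (a < b ∧ b < -(n : ℤ))
  · exact Or.inr (Or.inl ⟨hQ, hP, hQR hQ⟩)
  by_cases hR : a ≠ (i : ℤ) + 1 ∧ b < a ∧ b ≠ (i : ℤ)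
  · exact Or.inr (Or.inr (Or.inl ⟨hR, hP, hQ⟩))
  · exact Or.inr (Or.inr (Or.inr ⟨hP, hQ, hR⟩))
end
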